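/- arXiv:1505.03714 — 3 statements merged into one kernel-verified Lean document; each statement's English description precedes it below -/
import Mathlib

section
/- Let p ∈ (2,6). There exists a constant C_p > 0 depending only on p such that for every star graph G with at least one half-line (m ≥ 1) and every u ∈ H¹(G), one has ‖u‖_{L^p(G)}^p ≤ C_p ‖u‖_{L²(G)}^{p/2+1} ‖u′‖_{L²(G)}^{p/2−1}. -/
open MeasureTheory Filter Set

noncomputable section

/-- `H1R p f f'` : `f : ℝ → ℝ` is an `H¹` function on `ℝ`, with weak derivative `f'`
(encoded via the absolutely continuous representative and the fundamental theorem
of calculus), and moreover `|f|^p` is integrable (so that the NLS energy is finite). -/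
def H1R (p : ℝ) (f f' : ℝ → ℝ) : Prop :=
  Continuous f ∧
  (∀ x y : ℝ, IntervalIntegrable f' volume x y) ∧
  (∀ x y : ℝ, f y = f x + ∫ t in x..y, f' t) ∧
  Integrable (fun x => (f x) ^ 2) ∧
  Integrable (fun x => |f x| ^ p) ∧
  Integrable (fun x => (f' x) ^ 2)

/-- The NLS energy `E(f, ℝ) = ½∫|f'|² − (1/p)∫|f|^p` on the line. -/
def energyR (p : ℝ) (f f' : ℝ → ℝ) : ℝ :=
  (1 / 2) * (∫ x, (f' x) ^ 2) - (1 / p) * ∫ x, |f x| ^ p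

/-- The ground-state energy level `E_ℝ(μ)` on the line. -/
def levelR (p μ : ℝ) : ℝ :=
  sInf { e | ∃ f f' : ℝ → ℝ, H1R p f f' ∧ (∫ x, (f x) ^ 2) = μ ∧ e = energyR p f f' }

/-- `H1HalfLine p f f'` : `f` is an `H¹` function on the half-line `[0, ∞)`,
with weak derivative `f'`. -/
def H1HalfLine (p : ℝ) (f f' : ℝ → ℝ) : Prop :=
  ContinuousOn f (Ici 0) ∧
  (∀ x y : ℝ, 0 ≤ x → 0 ≤ y → IntervalIntegrable f' volume x y) ∧
  (∀ x y : ℝ, 0 ≤ x → 0 ≤ y → f y = f x + ∫ t in x..y, f' t) ∧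
  IntegrableOn (fun x => (f x) ^ 2) (Ioi 0) ∧
  IntegrableOn (fun x => |f x| ^ p) (Ioi 0) ∧
  IntegrableOn (fun x => (f' x) ^ 2) (Ioi 0)

/-- The NLS energy on the half-line. -/
def energyHL (p : ℝ) (f f' : ℝ → ℝ) : ℝ :=
  (1 / 2) * (∫ x in Ioi (0:ℝ), (f' x) ^ 2) - (1 / p) * ∫ x in Ioi (0:ℝ), |f x| ^ p

/-- The ground-state energy level `E_{ℝ⁺}(μ)` on the half-line. -/
def levelHL (p μ : ℝ) : ℝ :=
  sInf { e | ∃ f f' : ℝ → ℝ, H1HalfLine p f f' ∧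
    (∫ x in Ioi (0:ℝ), (f x) ^ 2) = μ ∧ e = energyHL p f f' }

/-- `H1Edge p ℓ g g'` : `g` is an `H¹` function on the finite edge `[0, ℓ]`,
with weak derivative `g'`. -/
def H1Edge (p ℓ : ℝ) (g g' : ℝ → ℝ) : Prop :=
  ContinuousOn g (Icc 0 ℓ) ∧
  (∀ x ∈ Icc 0 ℓ, ∀ y ∈ Icc 0 ℓ, IntervalIntegrable g' volume x y) ∧
  (∀ x ∈ Icc 0 ℓ, ∀ y ∈ Icc 0 ℓ, g y = g x + ∫ t in x..y, g' t) ∧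
  IntegrableOn (fun x => (g x) ^ 2) (Ioo 0 ℓ) ∧
  IntegrableOn (fun x => |g x| ^ p) (Ioo 0 ℓ) ∧
  IntegrableOn (fun x => (g' x) ^ 2) (Ioo 0 ℓ)

/-- A star graph: `m` half-lines and `k` finite edges of lengths `ℓ j > 0`,
all emanating from a single vertex (sitting at coordinate `0` of every edge). -/
structure StarGraph where
  m : ℕ
  k : ℕ
  ℓ : Fin k → ℝ
  ℓ_pos : ∀ j, 0 < ℓ j

/-- A function on a star graph `G`, given by its components on the half-lines
(`f i`, for `i : Fin G.m`) and on the finite edges (`g j`, for `j : Fin G.k`),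
together with chosen (weak) derivatives `f' i`, `g' j`. -/
structure GraphFun (G : StarGraph) where
  f : Fin G.m → ℝ → ℝ
  f' : Fin G.m → ℝ → ℝ
  g : Fin G.k → ℝ → ℝ
  g' : Fin G.k → ℝ → ℝ

/-- Membership in `H¹(G)`: every component is `H¹` on its edge, and all components
agree at the common vertex. -/
def InH1G (p : ℝ) (G : StarGraph) (u : GraphFun G) : Prop :=
  (∀ i, H1HalfLine p (u.f i) (u.f' i)) ∧
  (∀ j, H1Edge p (G.ℓ j) (u.g j) (u.g' j)) ∧
  (∀ i i', u.f i 0 = u.f i' 0) ∧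
  (∀ i j, u.f i 0 = u.g j 0) ∧
  (∀ j j', u.g j 0 = u.g j' 0)

/-- `‖u‖²_{L²(G)}`, the (squared) mass of `u`. -/
def massG (G : StarGraph) (u : GraphFun G) : ℝ :=
  (∑ i, ∫ x in Ioi (0:ℝ), (u.f i x) ^ 2) + ∑ j, ∫ x in Ioo 0 (G.ℓ j), (u.g j x) ^ 2

/-- `‖u‖^p_{L^p(G)}`. -/
def lpG (p : ℝ) (G : StarGraph) (u : GraphFun G) : ℝ :=
  (∑ i, ∫ x in Ioi (0:ℝ), |u.f i x| ^ p) + ∑ j, ∫ x in Ioo 0 (G.ℓ j), |u.g j x| ^ p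

/-- `‖u'‖²_{L²(G)}`, the (squared) `L²` norm of the derivative. -/
def kinG (G : StarGraph) (u : GraphFun G) : ℝ :=
  (∑ i, ∫ x in Ioi (0:ℝ), (u.f' i x) ^ 2) + ∑ j, ∫ x in Ioo 0 (G.ℓ j), (u.g' j x) ^ 2

/-- The NLS energy `E(u, G) = ½‖u'‖²_{L²(G)} − (1/p)‖u‖^p_{L^p(G)}`. -/
def energyG (p : ℝ) (G : StarGraph) (u : GraphFun G) : ℝ :=
  (1 / 2) * kinG G u - (1 / p) * lpG p G u

/-- `‖u‖_{L^∞(G)}`: the supremum of `|u|` over the whole graph. -/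
def supNormG (G : StarGraph) (u : GraphFun G) : ℝ :=
  sSup ({ y | ∃ i : Fin G.m, ∃ x ≥ (0:ℝ), y = |u.f i x| } ∪
        { y | ∃ j : Fin G.k, ∃ x ∈ Icc 0 (G.ℓ j), y = |u.g j x| })

/-- The ground-state energy level `E_G(μ) = inf {E(u,G) : u ∈ H¹_μ(G)}`. -/
def levelG (p : ℝ) (G : StarGraph) (μ : ℝ) : ℝ :=
  sInf { e | ∃ u : GraphFun G, InH1G p G u ∧ massG G u = μ ∧ e = energyG p G u }

/-- `u` is a ground state of mass `μ` on `G`: it minimizes `E(·, G)` over `H¹_μ(G)`. -/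
def IsGroundState (p : ℝ) (G : StarGraph) (μ : ℝ) (u : GraphFun G) : Prop :=
  InH1G p G u ∧ massG G u = μ ∧
  ∀ v : GraphFun G, InH1G p G v → massG G v = μ → energyG p G u ≤ energyG p G v

/-- Weak `L²(s)` convergence of a sequence of functions, tested against
square-integrable functions on `s`. -/
def WeakL2On (s : Set ℝ) (h : ℕ → ℝ → ℝ) (h₀ : ℝ → ℝ) : Prop :=
  ∀ φ : ℝ → ℝ, IntegrableOn (fun x => (φ x) ^ 2) s →
    Tendsto (fun n => ∫ x in s, h n x * φ x) atTop (nhds (∫ x in s, h₀ x * φ x))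

/-- Componentwise difference of two functions on a star graph. -/
def GraphFun.sub {G : StarGraph} (u v : GraphFun G) : GraphFun G :=
  ⟨fun i x => u.f i x - v.f i x, fun i x => u.f' i x - v.f' i x,
   fun j x => u.g j x - v.g j x, fun j x => u.g' j x - v.g' j x⟩

/-- The star graph obtained from `G` by attaching one additional finite edge of
length `ε` at the vertex. -/
def StarGraph.addEdge (G : StarGraph) (ε : ℝ) (hε : 0 < ε) : StarGraph where
  m := G.m
  k := G.k + 1
  ℓ := Fin.cons ε G.ℓ
  ℓ_pos := by
    intro j
    refine Fin.cases ?_ ?_ j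
    · simpa using hε
    · intro i; simpa using G.ℓ_pos i


/-- Cauchy–Schwarz: `∫_{Ioc a b} |h| ≤ √(b-a) · √(∫_{Ioc a b} h²)`. -/
lemma cs_helper {a b : ℝ} (hab : a ≤ b) {h : ℝ → ℝ}
    (h1 : IntegrableOn h (Ioc a b) volume)
    (h2 : IntegrableOn (fun x => h x ^ 2) (Ioc a b) volume) :
    ∫ x in Ioc a b, |h x| ≤ Real.sqrt (b - a) * Real.sqrt (∫ x in Ioc a b, h x ^ 2) := by
  set J := ∫ x in Ioc a b, h x ^ 2 with hJ
  have hJ0 : 0 ≤ J := setIntegral_nonneg measurableSet_Ioc (fun x _ => sq_nonneg _)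
  have hV0 : (0:ℝ) ≤ b - a := by linarith
  rcases eq_or_lt_of_le hab with rfl | hab'
  · simp [Set.Ioc_self, mul_nonneg (Real.sqrt_nonneg _) (Real.sqrt_nonneg _)]
  rcases eq_or_lt_of_le hJ0 with hJz | hJpos
  · -- J = 0 : h = 0 a.e. on Ioc a b
    have : (fun x => h x ^ 2) =ᵐ[volume.restrict (Ioc a b)] 0 := by
      have := (integral_eq_zero_iff_of_nonneg_ae
        (Eventually.of_forall (fun x => sq_nonneg (h x))) h2).mp hJz.symm
      exact this
    have habs : (fun x => |h x|) =ᵐ[volume.restrict (Ioc a b)] 0 := by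
      filter_upwards [this] with x hx
      have : h x ^ 2 = 0 := hx
      have : h x = 0 := by nlinarith [sq_nonneg (h x)]
      simp [this]
    rw [integral_congr_ae habs]
    simp [mul_nonneg (Real.sqrt_nonneg _) (Real.sqrt_nonneg _)]
  · set V := b - a with hVdef
    have hVpos : 0 < V := by simp [hVdef]; linarith
    set c := Real.sqrt (J / V) with hc
    have hcpos : 0 < c := Real.sqrt_pos.mpr (div_pos hJpos hVpos)
    have hptwise : ∀ x ∈ Ioc a b, |h x| ≤ h x ^ 2 / (2 * c) + c / 2 := by
      intro x _
      rw [div_add_div _ _ (by positivity : (2*c:ℝ) ≠ 0) (by norm_num : (2:ℝ) ≠ 0),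
        le_div_iff₀ (by positivity)]
      nlinarith [sq_nonneg (|h x| - c), sq_abs (h x)]
    have hint : ∫ x in Ioc a b, |h x| ≤ ∫ x in Ioc a b, (h x ^ 2 / (2 * c) + c / 2) := by
      refine setIntegral_mono_on h1.abs ?_ measurableSet_Ioc hptwise
      exact (h2.div_const _).add (Iff.mpr integrableOn_const_iff (Or.inr (by rw [Real.volume_Ioc]; exact ENNReal.ofReal_lt_top)))
    have heval : ∫ x in Ioc a b, (h x ^ 2 / (2 * c) + c / 2) = J / (2 * c) + c / 2 * V := by
      rw [integral_add (h2.div_const _) (Iff.mpr integrableOn_const_iff (Or.inr (by rw [Real.volume_Ioc]; exact ENNReal.ofReal_lt_top)))]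
      rw [integral_div, setIntegral_const]
      simp [Real.volume_real_Ioc, max_eq_left hV0, Real.volume_Ioc, ENNReal.toReal_ofReal hV0, ← hVdef, smul_eq_mul]
      ring
    have hkey : J / (2 * c) + c / 2 * V = Real.sqrt V * Real.sqrt J := by
      have h1' : c = Real.sqrt J / Real.sqrt V := by rw [hc, Real.sqrt_div hJ0]
      have hsJ : Real.sqrt J ^ 2 = J := Real.sq_sqrt hJ0
      have hsV : Real.sqrt V ^ 2 = V := Real.sq_sqrt hVpos.le
      have hsJpos : 0 < Real.sqrt J := Real.sqrt_pos.mpr hJpos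
      have hsVpos : 0 < Real.sqrt V := Real.sqrt_pos.mpr hVpos
      rw [h1']
      field_simp
      nlinarith [hsJ, hsV]
    calc ∫ x in Ioc a b, |h x| ≤ J / (2 * c) + c / 2 * V := heval ▸ hint
      _ = Real.sqrt V * Real.sqrt J := hkey

/-- Connection bound: `|f x| ≤ |f y| + √(dist) · √(∫ f'²)`. -/
lemma conn_bound {f f' : ℝ → ℝ} (x y : ℝ)
    (hftc : f x = f y + ∫ t in y..x, f' t)
    (hii : IntervalIntegrable f' volume y x)
    (h2 : IntegrableOn (fun t => f' t ^ 2) (Ioc (min x y) (max x y)) volume) :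
    |f x| ≤ |f y| +
      Real.sqrt (max x y - min x y) *
        Real.sqrt (∫ t in Ioc (min x y) (max x y), f' t ^ 2) := by
  have hIoc : Set.uIoc y x = Ioc (min x y) (max x y) := by
    rw [Set.uIoc_comm]; rfl
  have hnorm : |∫ t in y..x, f' t| ≤ ∫ t in Ioc (min x y) (max x y), |f' t| := by
    have := intervalIntegral.norm_integral_le_integral_norm_uIoc (f := f') (a := y) (b := x)
      (μ := volume)
    simpa [hIoc, Real.norm_eq_abs] using this
  have hcs : ∫ t in Ioc (min x y) (max x y), |f' t| ≤
      Real.sqrt (max x y - min x y) * Real.sqrt (∫ t in Ioc (min x y) (max x y), f' t ^ 2) := by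
    refine cs_helper (min_le_max) ?_ h2
    have := intervalIntegrable_iff.mp hii
    rwa [hIoc] at this
  calc |f x| = |f y + ∫ t in y..x, f' t| := by rw [hftc]
    _ ≤ |f y| + |∫ t in y..x, f' t| := abs_add_le _ _
    _ ≤ _ := by linarith

/-- Averaging: a continuous function with `∫ f² ≤ M²` on an interval of length `L`
takes a value `≤ M/√L` somewhere. -/
lemma avg_bound {f : ℝ → ℝ} {c L M : ℝ} (hL : 0 < L) (hM : 0 ≤ M)
    (hcont : ContinuousOn f (Icc c (c + L)))
    (h2 : IntegrableOn (fun x => f x ^ 2) (Ioc c (c + L)) volume)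
    (hle : ∫ x in Ioc c (c + L), f x ^ 2 ≤ M ^ 2) :
    ∃ y ∈ Icc c (c + L), |f y| ≤ M / Real.sqrt L := by
  have hne : (Icc c (c + L)).Nonempty := Set.nonempty_Icc.mpr (by linarith)
  obtain ⟨y, hy, hmin⟩ := isCompact_Icc.exists_isMinOn hne ((hcont.pow 2))
  refine ⟨y, hy, ?_⟩
  have hmin' : ∀ t ∈ Ioc c (c + L), f y ^ 2 ≤ f t ^ 2 := fun t ht =>
    hmin (Set.Ioc_subset_Icc_self ht)
  have hconst : L * f y ^ 2 ≤ ∫ t in Ioc c (c + L), f t ^ 2 := by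
    have : ∫ _t in Ioc c (c + L), f y ^ 2 ≤ ∫ t in Ioc c (c + L), f t ^ 2 :=
      setIntegral_mono_on (Iff.mpr integrableOn_const_iff (Or.inr (by
        rw [Real.volume_Ioc]; exact ENNReal.ofReal_lt_top))) h2 measurableSet_Ioc hmin'
    rwa [setIntegral_const, Real.volume_real_Ioc, max_eq_left (by linarith),
      add_sub_cancel_left, smul_eq_mul] at this
  have hfy2 : f y ^ 2 ≤ M ^ 2 / L := by
    rw [le_div_iff₀ hL]; nlinarith
  calc |f y| = Real.sqrt (f y ^ 2) := (Real.sqrt_sq_eq_abs _).symm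
    _ ≤ Real.sqrt (M ^ 2 / L) := Real.sqrt_le_sqrt hfy2
    _ = M / Real.sqrt L := by
        rw [Real.sqrt_div (sq_nonneg M), Real.sqrt_sq hM]

/-- Segment bound: on an interval of length `L` where the FTC representation holds,
`|f x| ≤ M/√L + K√L`. -/
lemma segment_bound {f f' : ℝ → ℝ} {c L M K : ℝ} (hL : 0 < L) (hM : 0 ≤ M) (hK : 0 ≤ K)
    {x : ℝ} (hx : x ∈ Icc c (c + L))
    (hcont : ContinuousOn f (Icc c (c + L)))
    (hii : ∀ y ∈ Icc c (c + L), IntervalIntegrable f' volume y x)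
    (hftc : ∀ y ∈ Icc c (c + L), f x = f y + ∫ t in y..x, f' t)
    (h2 : IntegrableOn (fun t => f t ^ 2) (Ioc c (c + L)) volume)
    (h2' : IntegrableOn (fun t => f' t ^ 2) (Ioc c (c + L)) volume)
    (hm : ∫ t in Ioc c (c + L), f t ^ 2 ≤ M ^ 2)
    (hk : ∫ t in Ioc c (c + L), f' t ^ 2 ≤ K ^ 2) :
    |f x| ≤ M / Real.sqrt L + K * Real.sqrt L := by
  obtain ⟨y, hy, hfy⟩ := avg_bound hL hM hcont h2 hm
  have hsub : Ioc (min x y) (max x y) ⊆ Ioc c (c + L) := by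
    intro t ht
    constructor
    · exact lt_of_le_of_lt (le_min hx.1 hy.1) ht.1
    · exact le_trans ht.2 (max_le hx.2 hy.2)
  have h2'' : IntegrableOn (fun t => f' t ^ 2) (Ioc (min x y) (max x y)) volume :=
    h2'.mono_set hsub
  have hKint : ∫ t in Ioc (min x y) (max x y), f' t ^ 2 ≤ K ^ 2 := by
    refine le_trans (setIntegral_mono_set h2' ?_ (HasSubset.Subset.eventuallyLE hsub)) hk
    exact Eventually.of_forall (fun t => sq_nonneg _)
  have hconn := conn_bound x y (hftc y hy) (hii y hy) h2''
  have hd : max x y - min x y ≤ L := by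
    rcases le_total x y with h | h
    · simp [max_eq_right h, min_eq_left h]
      have := hy.2; have := hx.1; linarith
    · simp [max_eq_left h, min_eq_right h]
      have := hx.2; have := hy.1; linarith
  have hs1 : Real.sqrt (max x y - min x y) ≤ Real.sqrt L := Real.sqrt_le_sqrt hd
  have hs2 : Real.sqrt (∫ t in Ioc (min x y) (max x y), f' t ^ 2) ≤ K := by
    calc Real.sqrt (∫ t in Ioc (min x y) (max x y), f' t ^ 2)
        ≤ Real.sqrt (K ^ 2) := Real.sqrt_le_sqrt hKint
      _ = K := Real.sqrt_sq hK
  have hprod : Real.sqrt (max x y - min x y) *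
      Real.sqrt (∫ t in Ioc (min x y) (max x y), f' t ^ 2) ≤ Real.sqrt L * K := by
    exact mul_le_mul hs1 hs2 (Real.sqrt_nonneg _) (Real.sqrt_nonneg _)
  calc |f x| ≤ |f y| + Real.sqrt (max x y - min x y) *
        Real.sqrt (∫ t in Ioc (min x y) (max x y), f' t ^ 2) := hconn
    _ ≤ M / Real.sqrt L + Real.sqrt L * K := add_le_add hfy hprod
    _ = M / Real.sqrt L + K * Real.sqrt L := by ring

/-- Pointwise bound on a half-line. -/
lemma halfline_ptwise {p : ℝ} {f f' : ℝ → ℝ} (hf : H1HalfLine p f f')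
    {M K L : ℝ} (hM : 0 ≤ M) (hK : 0 ≤ K) (hL : 0 < L)
    (hm : ∫ x in Ioi (0:ℝ), f x ^ 2 ≤ M ^ 2)
    (hk : ∫ x in Ioi (0:ℝ), f' x ^ 2 ≤ K ^ 2)
    {x : ℝ} (hx : 0 ≤ x) :
    |f x| ≤ M / Real.sqrt L + K * Real.sqrt L := by
  obtain ⟨hcont, hii, hftc, h2, hp, h2'⟩ := hf
  have hsub : Ioc x (x + L) ⊆ Ioi (0:ℝ) := fun t ht => lt_of_le_of_lt hx ht.1
  have hsubI : Icc x (x + L) ⊆ Ici (0:ℝ) := fun t ht => le_trans hx ht.1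
  refine segment_bound hL hM hK (Set.mem_Icc.mpr ⟨le_refl x, by linarith⟩)
    (hcont.mono hsubI) (fun y hy => hii y x (le_trans hx hy.1) hx)
    (fun y hy => hftc y x (le_trans hx hy.1) hx)
    (h2.mono_set hsub) (h2'.mono_set hsub) ?_ ?_
  · refine le_trans (setIntegral_mono_set h2 (Eventually.of_forall fun t => sq_nonneg _)
      (HasSubset.Subset.eventuallyLE hsub)) hm
  · refine le_trans (setIntegral_mono_set h2' (Eventually.of_forall fun t => sq_nonneg _)
      (HasSubset.Subset.eventuallyLE hsub)) hk

/-- Pointwise bound on a finite edge. -/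
lemma edge_ptwise {p ℓ : ℝ} (hℓ : 0 < ℓ) {g g' : ℝ → ℝ} (hg : H1Edge p ℓ g g')
    {M K L : ℝ} (hM : 0 ≤ M) (hK : 0 ≤ K) (hL : 0 < L)
    (hm : ∫ x in Ioo 0 ℓ, g x ^ 2 ≤ M ^ 2)
    (hk : ∫ x in Ioo 0 ℓ, g' x ^ 2 ≤ K ^ 2)
    (hvertex : |g 0| ≤ M / Real.sqrt L + K * Real.sqrt L)
    {x : ℝ} (hx : x ∈ Icc 0 ℓ) :
    |g x| ≤ M / Real.sqrt L + 2 * (K * Real.sqrt L) := by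
  obtain ⟨hcont, hii, hftc, h2, hp, h2'⟩ := hg
  have hKL : 0 ≤ K * Real.sqrt L := mul_nonneg hK (Real.sqrt_nonneg _)
  rcases le_or_gt L ℓ with hcase | hcase
  · -- long edge: average inside the edge
    set c := min x (ℓ - L) with hc
    have hc0 : 0 ≤ c := le_min hx.1 (by linarith)
    have hcL : c + L ≤ ℓ := by
      have : c ≤ ℓ - L := min_le_right _ _
      linarith
    have hxmem : x ∈ Icc c (c + L) := by
      constructor
      · exact min_le_left _ _
      · rcases le_total x (ℓ - L) with h | h
        · rw [hc, min_eq_left h]; linarith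
        · rw [hc, min_eq_right h]; linarith [hx.2]
    have hsubI : Icc c (c + L) ⊆ Icc 0 ℓ := fun t ht =>
      ⟨le_trans hc0 ht.1, le_trans ht.2 hcL⟩
    have hsubo : Ioo c (c + L) ⊆ Ioo 0 ℓ := fun t ht =>
      ⟨lt_of_le_of_lt hc0 ht.1, lt_of_lt_of_le ht.2 hcL⟩
    have hxIcc : x ∈ Icc 0 ℓ := hx
    have h2c : IntegrableOn (fun t => g t ^ 2) (Ioc c (c + L)) volume :=
      Iff.mpr integrableOn_Ioc_iff_integrableOn_Ioo (h2.mono_set hsubo)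
    have h2c' : IntegrableOn (fun t => g' t ^ 2) (Ioc c (c + L)) volume :=
      Iff.mpr integrableOn_Ioc_iff_integrableOn_Ioo (h2'.mono_set hsubo)
    have hmle : ∫ t in Ioc c (c + L), g t ^ 2 ≤ M ^ 2 := by
      rw [integral_Ioc_eq_integral_Ioo]
      exact le_trans (setIntegral_mono_set h2 (Eventually.of_forall fun t => sq_nonneg _)
        (HasSubset.Subset.eventuallyLE hsubo)) hm
    have hkle : ∫ t in Ioc c (c + L), g' t ^ 2 ≤ K ^ 2 := by
      rw [integral_Ioc_eq_integral_Ioo]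
      exact le_trans (setIntegral_mono_set h2' (Eventually.of_forall fun t => sq_nonneg _)
        (HasSubset.Subset.eventuallyLE hsubo)) hk
    have := segment_bound hL hM hK hxmem (hcont.mono hsubI)
      (fun y hy => hii y (hsubI hy) x hxIcc)
      (fun y hy => hftc y (hsubI hy) x hxIcc)
      h2c h2c' hmle hkle
    linarith
  · -- short edge: connect to the vertex
    have h0mem : (0:ℝ) ∈ Icc 0 ℓ := ⟨le_refl _, hℓ.le⟩
    have hmin : min x 0 = 0 := min_eq_right hx.1
    have hmax : max x 0 = x := max_eq_left hx.1
    have hsubo : Ioo 0 x ⊆ Ioo 0 ℓ := Set.Ioo_subset_Ioo le_rfl hx.2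
    have h2x' : IntegrableOn (fun t => g' t ^ 2) (Ioc (min x 0) (max x 0)) volume := by
      rw [hmin, hmax]
      exact Iff.mpr integrableOn_Ioc_iff_integrableOn_Ioo (h2'.mono_set hsubo)
    have hconn := conn_bound x 0 (hftc 0 h0mem x hx) (hii 0 h0mem x hx) h2x'
    rw [hmin, hmax, sub_zero] at hconn
    have hkle : ∫ t in Ioc 0 x, g' t ^ 2 ≤ K ^ 2 := by
      rw [integral_Ioc_eq_integral_Ioo]
      exact le_trans (setIntegral_mono_set h2' (Eventually.of_forall fun t => sq_nonneg _)
        (HasSubset.Subset.eventuallyLE hsubo)) hk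
    have hs1 : Real.sqrt x ≤ Real.sqrt L := Real.sqrt_le_sqrt (by linarith [hx.2])
    have hs2 : Real.sqrt (∫ t in Ioc 0 x, g' t ^ 2) ≤ K := by
      calc Real.sqrt (∫ t in Ioc 0 x, g' t ^ 2) ≤ Real.sqrt (K ^ 2) := Real.sqrt_le_sqrt hkle
        _ = K := Real.sqrt_sq hK
    have hprod : Real.sqrt x * Real.sqrt (∫ t in Ioc 0 x, g' t ^ 2) ≤ Real.sqrt L * K :=
      mul_le_mul hs1 hs2 (Real.sqrt_nonneg _) (Real.sqrt_nonneg _)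
    calc |g x| ≤ |g 0| + Real.sqrt x * Real.sqrt (∫ t in Ioc 0 x, g' t ^ 2) := hconn
      _ ≤ (M / Real.sqrt L + K * Real.sqrt L) + Real.sqrt L * K := add_le_add hvertex hprod
      _ = M / Real.sqrt L + 2 * (K * Real.sqrt L) := by ring

/-- From a pointwise bound `|f| ≤ B` we get `∫ |f|^p ≤ B^(p-2) ∫ f²`. -/
lemma int_rpow_le {s : Set ℝ} (hs : MeasurableSet s) {f : ℝ → ℝ} {B p : ℝ}
    (hp : 2 < p) (hB : 0 ≤ B) (hbound : ∀ x ∈ s, |f x| ≤ B)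
    (h2 : IntegrableOn (fun x => f x ^ 2) s volume)
    (hip : IntegrableOn (fun x => |f x| ^ p) s volume) :
    ∫ x in s, |f x| ^ p ≤ B ^ (p - 2) * ∫ x in s, f x ^ 2 := by
  have hmono : ∫ x in s, |f x| ^ p ≤ ∫ x in s, B ^ (p - 2) * f x ^ 2 := by
    refine setIntegral_mono_on hip (h2.const_mul _) hs ?_
    intro x hx
    rcases eq_or_lt_of_le (abs_nonneg (f x)) with h0 | h0
    · have hfx : f x = 0 := abs_eq_zero.mp h0.symm
      rw [hfx]
      rw [abs_zero, Real.zero_rpow (by linarith : p ≠ 0)]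
      positivity
    · have heq : |f x| ^ p = |f x| ^ (p - 2) * |f x| ^ (2:ℝ) := by
        rw [← Real.rpow_add h0]; ring_nf
      have h2eq : |f x| ^ (2:ℝ) = f x ^ 2 := by
        rw [show (2:ℝ) = ((2:ℕ):ℝ) by norm_num, Real.rpow_natCast, sq_abs]
      rw [heq, h2eq]
      exact mul_le_mul (Real.rpow_le_rpow (abs_nonneg _) (hbound x hx) (by linarith))
        le_rfl (sq_nonneg _) (Real.rpow_nonneg hB _)
  rwa [MeasureTheory.integral_const_mul] at hmono

lemma massG_nonneg (G : StarGraph) (u : GraphFun G) : 0 ≤ massG G u :=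
  add_nonneg
    (Finset.sum_nonneg fun i _ => setIntegral_nonneg measurableSet_Ioi fun x _ => sq_nonneg _)
    (Finset.sum_nonneg fun j _ => setIntegral_nonneg measurableSet_Ioo fun x _ => sq_nonneg _)

lemma kinG_nonneg (G : StarGraph) (u : GraphFun G) : 0 ≤ kinG G u :=
  add_nonneg
    (Finset.sum_nonneg fun i _ => setIntegral_nonneg measurableSet_Ioi fun x _ => sq_nonneg _)
    (Finset.sum_nonneg fun j _ => setIntegral_nonneg measurableSet_Ioo fun x _ => sq_nonneg _)

/-- Master estimate: for every `L > 0`,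
`‖u‖_p^p ≤ (M/√L + 2K√L)^(p-2) · M²` where `M = √mass`, `K = √kin`. -/
lemma master {p : ℝ} (hp : 2 < p) (G : StarGraph) (hm1 : 1 ≤ G.m)
    (u : GraphFun G) (hu : InH1G p G u) {L : ℝ} (hL : 0 < L) :
    lpG p G u ≤
      (Real.sqrt (massG G u) / Real.sqrt L +
        2 * (Real.sqrt (kinG G u) * Real.sqrt L)) ^ (p - 2) * massG G u := by
  obtain ⟨huf, hug, hff, hfg, hgg⟩ := hu
  set M := Real.sqrt (massG G u) with hMdef
  set K := Real.sqrt (kinG G u) with hKdef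
  set B := M / Real.sqrt L + 2 * (K * Real.sqrt L) with hBdef
  have hM0 : 0 ≤ M := Real.sqrt_nonneg _
  have hK0 : 0 ≤ K := Real.sqrt_nonneg _
  have hB0 : 0 ≤ B := by positivity
  have hM2 : M ^ 2 = massG G u := Real.sq_sqrt (massG_nonneg G u)
  have hK2 : K ^ 2 = kinG G u := Real.sq_sqrt (kinG_nonneg G u)
  -- componentwise mass/kinetic bounds
  have hfm : ∀ i, ∫ x in Ioi (0:ℝ), (u.f i x) ^ 2 ≤ M ^ 2 := by
    intro i
    rw [hM2]
    unfold massG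
    have h1 : ∫ x in Ioi (0:ℝ), (u.f i x) ^ 2 ≤ ∑ i, ∫ x in Ioi (0:ℝ), (u.f i x) ^ 2 :=
      Finset.single_le_sum
        (fun i _ => setIntegral_nonneg measurableSet_Ioi fun x _ => sq_nonneg _)
        (Finset.mem_univ i)
    have h2 : (0:ℝ) ≤ ∑ j, ∫ x in Ioo 0 (G.ℓ j), (u.g j x) ^ 2 :=
      Finset.sum_nonneg fun j _ => setIntegral_nonneg measurableSet_Ioo fun x _ => sq_nonneg _
    linarith
  have hgm : ∀ j, ∫ x in Ioo 0 (G.ℓ j), (u.g j x) ^ 2 ≤ M ^ 2 := by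
    intro j
    rw [hM2]
    unfold massG
    have h1 : ∫ x in Ioo 0 (G.ℓ j), (u.g j x) ^ 2 ≤
        ∑ j, ∫ x in Ioo 0 (G.ℓ j), (u.g j x) ^ 2 :=
      Finset.single_le_sum
        (fun j _ => setIntegral_nonneg measurableSet_Ioo fun x _ => sq_nonneg _)
        (Finset.mem_univ j)
    have h2 : (0:ℝ) ≤ ∑ i, ∫ x in Ioi (0:ℝ), (u.f i x) ^ 2 :=
      Finset.sum_nonneg fun i _ => setIntegral_nonneg measurableSet_Ioi fun x _ => sq_nonneg _
    linarith
  have hfk : ∀ i, ∫ x in Ioi (0:ℝ), (u.f' i x) ^ 2 ≤ K ^ 2 := by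
    intro i
    rw [hK2]
    unfold kinG
    have h1 : ∫ x in Ioi (0:ℝ), (u.f' i x) ^ 2 ≤ ∑ i, ∫ x in Ioi (0:ℝ), (u.f' i x) ^ 2 :=
      Finset.single_le_sum
        (fun i _ => setIntegral_nonneg measurableSet_Ioi fun x _ => sq_nonneg _)
        (Finset.mem_univ i)
    have h2 : (0:ℝ) ≤ ∑ j, ∫ x in Ioo 0 (G.ℓ j), (u.g' j x) ^ 2 :=
      Finset.sum_nonneg fun j _ => setIntegral_nonneg measurableSet_Ioo fun x _ => sq_nonneg _
    linarith
  have hgk : ∀ j, ∫ x in Ioo 0 (G.ℓ j), (u.g' j x) ^ 2 ≤ K ^ 2 := by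
    intro j
    rw [hK2]
    unfold kinG
    have h1 : ∫ x in Ioo 0 (G.ℓ j), (u.g' j x) ^ 2 ≤
        ∑ j, ∫ x in Ioo 0 (G.ℓ j), (u.g' j x) ^ 2 :=
      Finset.single_le_sum
        (fun j _ => setIntegral_nonneg measurableSet_Ioo fun x _ => sq_nonneg _)
        (Finset.mem_univ j)
    have h2 : (0:ℝ) ≤ ∑ i, ∫ x in Ioi (0:ℝ), (u.f' i x) ^ 2 :=
      Finset.sum_nonneg fun i _ => setIntegral_nonneg measurableSet_Ioi fun x _ => sq_nonneg _
    linarith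
  -- vertex bound
  have i₀ : Fin G.m := ⟨0, hm1⟩
  have hKL : 0 ≤ K * Real.sqrt L := mul_nonneg hK0 (Real.sqrt_nonneg _)
  have hvert : ∀ j, |u.g j 0| ≤ M / Real.sqrt L + K * Real.sqrt L := by
    intro j
    rw [← hfg i₀ j]
    exact halfline_ptwise (huf i₀) hM0 hK0 hL (hfm i₀) (hfk i₀) le_rfl
  -- pointwise bounds
  have hfb : ∀ i, ∀ x ∈ Ioi (0:ℝ), |u.f i x| ≤ B := by
    intro i x hx
    have := halfline_ptwise (huf i) hM0 hK0 hL (hfm i) (hfk i) (le_of_lt hx)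
    rw [hBdef]; linarith
  have hgb : ∀ j, ∀ x ∈ Ioo 0 (G.ℓ j), |u.g j x| ≤ B := by
    intro j x hx
    have := edge_ptwise (G.ℓ_pos j) (hug j) hM0 hK0 hL (hgm j) (hgk j) (hvert j)
      (Set.Ioo_subset_Icc_self hx)
    rw [hBdef]; linarith
  -- integrate
  have hfint : ∀ i, ∫ x in Ioi (0:ℝ), |u.f i x| ^ p ≤
      B ^ (p - 2) * ∫ x in Ioi (0:ℝ), (u.f i x) ^ 2 := fun i =>
    int_rpow_le measurableSet_Ioi hp hB0 (hfb i) (huf i).2.2.2.1 (huf i).2.2.2.2.1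
  have hgint : ∀ j, ∫ x in Ioo 0 (G.ℓ j), |u.g j x| ^ p ≤
      B ^ (p - 2) * ∫ x in Ioo 0 (G.ℓ j), (u.g j x) ^ 2 := fun j =>
    int_rpow_le measurableSet_Ioo hp hB0 (hgb j) (hug j).2.2.2.1 (hug j).2.2.2.2.1
  unfold lpG massG
  calc (∑ i, ∫ x in Ioi (0:ℝ), |u.f i x| ^ p) + ∑ j, ∫ x in Ioo 0 (G.ℓ j), |u.g j x| ^ p
      ≤ (∑ i, B ^ (p - 2) * ∫ x in Ioi (0:ℝ), (u.f i x) ^ 2) +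
        ∑ j, B ^ (p - 2) * ∫ x in Ioo 0 (G.ℓ j), (u.g j x) ^ 2 :=
      add_le_add (Finset.sum_le_sum fun i _ => hfint i) (Finset.sum_le_sum fun j _ => hgint j)
    _ = B ^ (p - 2) * ((∑ i, ∫ x in Ioi (0:ℝ), (u.f i x) ^ 2) +
        ∑ j, ∫ x in Ioo 0 (G.ℓ j), (u.g j x) ^ 2) := by
      rw [← Finset.mul_sum, ← Finset.mul_sum, mul_add]

/-- universal Gagliardo–Nirenberg inequality, Proposition 2.1:
there is `C_p > 0`, depending only on `p ∈ (2,6)`, such that for every star graph `G`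
with at least one half-line and every `u ∈ H¹(G)`,
`‖u‖_{L^p(G)}^p ≤ C_p ‖u‖_{L²(G)}^{p/2+1} ‖u'‖_{L²(G)}^{p/2−1}`. -/
theorem gagliardo_nirenberg_on_graphs (p : ℝ) (hp₁ : 2 < p) (hp₂ : p < 6) :
    ∃ C : ℝ, 0 < C ∧
      ∀ G : StarGraph, 1 ≤ G.m → ∀ u : GraphFun G, InH1G p G u →
        lpG p G u ≤
          C * Real.sqrt (massG G u) ^ (p / 2 + 1) *
            Real.sqrt (kinG G u) ^ (p / 2 - 1) := by
  refine ⟨(3:ℝ) ^ (p - 2), Real.rpow_pos_of_pos (by norm_num) _, ?_⟩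
  intro G hm1 u hu
  set M := Real.sqrt (massG G u) with hMdef
  set K := Real.sqrt (kinG G u) with hKdef
  have hM0 : 0 ≤ M := Real.sqrt_nonneg _
  have hK0 : 0 ≤ K := Real.sqrt_nonneg _
  have hM2 : M ^ 2 = massG G u := Real.sq_sqrt (massG_nonneg G u)
  have hp2 : (0:ℝ) < p - 2 := by linarith
  rcases eq_or_lt_of_le hM0 with hMz | hMpos
  · -- M = 0 : mass is zero, lpG ≤ 0
    have h := master hp₁ G hm1 u hu (L := 1) one_pos
    rw [← hMdef, ← hKdef, ← hM2, ← hMz] at h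
    have hlp : lpG p G u ≤ 0 := by simpa using h
    have hrhs : (0:ℝ) ≤ (3:ℝ) ^ (p - 2) * M ^ (p / 2 + 1) * K ^ (p / 2 - 1) := by
      have : (0:ℝ) ≤ M ^ (p / 2 + 1) := Real.rpow_nonneg hM0 _
      have : (0:ℝ) ≤ K ^ (p / 2 - 1) := Real.rpow_nonneg hK0 _
      positivity
    linarith
  rcases eq_or_lt_of_le hK0 with hKz | hKpos
  · -- K = 0 : show lpG ≤ 0 = RHS
    have hrhs : (3:ℝ) ^ (p - 2) * M ^ (p / 2 + 1) * K ^ (p / 2 - 1) = 0 := by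
      rw [← hKz, Real.zero_rpow (by linarith : p / 2 - 1 ≠ 0), mul_zero]
    rw [hrhs]
    refine le_of_forall_pos_le_add ?_
    intro ε hε
    have hM2pos : 0 < M ^ 2 := by positivity
    set t := ε / M ^ 2 with htdef
    have ht : 0 < t := div_pos hε hM2pos
    set r := t ^ (p - 2)⁻¹ with hrdef
    have hr : 0 < r := Real.rpow_pos_of_pos ht _
    set L := (M / r) ^ 2 + 1 with hLdef
    have hL : 0 < L := by positivity
    have hsL : M / r ≤ Real.sqrt L := by
      have h1 : Real.sqrt ((M / r) ^ 2) ≤ Real.sqrt L :=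
        Real.sqrt_le_sqrt (by rw [hLdef]; linarith)
      rwa [Real.sqrt_sq (by positivity)] at h1
    have hsLpos : 0 < Real.sqrt L := Real.sqrt_pos.mpr hL
    have hMr : M / Real.sqrt L ≤ r := by
      rw [div_le_iff₀ hsLpos]
      calc M = (M / r) * r := by field_simp
        _ ≤ Real.sqrt L * r := by nlinarith
        _ = r * Real.sqrt L := by ring
    have h := master hp₁ G hm1 u hu hL
    rw [← hMdef, ← hKdef, ← hKz, ← hM2] at h
    have hB : M / Real.sqrt L + 2 * (0 * Real.sqrt L) = M / Real.sqrt L := by ring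
    rw [hB] at h
    have hbound : (M / Real.sqrt L) ^ (p - 2) ≤ t := by
      calc (M / Real.sqrt L) ^ (p - 2) ≤ r ^ (p - 2) :=
          Real.rpow_le_rpow (by positivity) hMr (by linarith)
        _ = t ^ ((p - 2)⁻¹ * (p - 2)) := by rw [hrdef, ← Real.rpow_mul ht.le]
        _ = t := by rw [inv_mul_cancel₀ (by linarith : p - 2 ≠ 0), Real.rpow_one]
    calc lpG p G u ≤ (M / Real.sqrt L) ^ (p - 2) * M ^ 2 := h
      _ ≤ t * M ^ 2 := by nlinarith
      _ = ε := by rw [htdef]; field_simp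
      _ = 0 + ε := by ring
  · -- main case: M > 0, K > 0
    set L := M / K with hLdef
    have hL : 0 < L := div_pos hMpos hKpos
    have h := master hp₁ G hm1 u hu hL
    rw [← hMdef, ← hKdef, ← hM2] at h
    have hsM : 0 < Real.sqrt M := Real.sqrt_pos.mpr hMpos
    have hsK : 0 < Real.sqrt K := Real.sqrt_pos.mpr hKpos
    have hsqL : Real.sqrt L = Real.sqrt M / Real.sqrt K := by
      rw [hLdef, Real.sqrt_div hM0]
    have hB : M / Real.sqrt L + 2 * (K * Real.sqrt L) = 3 * (Real.sqrt M * Real.sqrt K) := by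
      rw [hsqL]
      have h1 : M / (Real.sqrt M / Real.sqrt K) = Real.sqrt M * Real.sqrt K := by
        rw [div_div_eq_mul_div]
        field_simp
        linear_combination (-1:ℝ) * Real.sq_sqrt hMpos.le
      have h2 : K * (Real.sqrt M / Real.sqrt K) = Real.sqrt M * Real.sqrt K := by
        field_simp
        linear_combination (-1:ℝ) * Real.sq_sqrt hKpos.le
      rw [h1, h2]; ring
    rw [hB] at h
    have hexp : (3 * (Real.sqrt M * Real.sqrt K)) ^ (p - 2) * M ^ 2 =
        (3:ℝ) ^ (p - 2) * M ^ (p / 2 + 1) * K ^ (p / 2 - 1) := by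
      rw [Real.mul_rpow (by norm_num) (by positivity),
        Real.mul_rpow hsM.le hsK.le]
      have hsMr : Real.sqrt M ^ (p - 2) = M ^ (p / 2 - 1) := by
        rw [Real.sqrt_eq_rpow, ← Real.rpow_mul hM0]
        congr 1; ring
      have hsKr : Real.sqrt K ^ (p - 2) = K ^ (p / 2 - 1) := by
        rw [Real.sqrt_eq_rpow, ← Real.rpow_mul hK0]
        congr 1; ring
      have hMM : M ^ (p / 2 - 1) * M ^ (2:ℕ) = M ^ (p / 2 + 1) := by
        rw [← Real.rpow_natCast M 2, ← Real.rpow_add hMpos]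
        congr 1; push_cast; ring
      rw [hsMr, hsKr, ← hMM]; ring
    exact h.trans_eq hexp
end
end

section
/- For every star graph G with at least one half-line (m ≥ 1) and every u ∈ H¹(G), the supremum norm satisfies ‖u‖_{L^∞(G)}² ≤ 2 ‖u‖_{L²(G)} ‖u′‖_{L²(G)}, where ‖u‖_{L^∞(G)} = max of the sup norms of the components of u. -/
open MeasureTheory Filter Set

noncomputable section

private lemma cs_integral {μ : Measure ℝ} {u v : ℝ → ℝ}
    (hu : AEStronglyMeasurable u μ) (hv : AEStronglyMeasurable v μ)
    (hu2 : Integrable (fun x => u x ^ 2) μ) (hv2 : Integrable (fun x => v x ^ 2) μ) :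
    ∫ x, |u x * v x| ∂μ ≤ Real.sqrt (∫ x, u x ^ 2 ∂μ) * Real.sqrt (∫ x, v x ^ 2 ∂μ) := by
  have hpq : (2:ℝ).HolderConjugate 2 := (Real.holderConjugate_iff_eq_conjExponent one_lt_two).2 (by norm_num)
  have h2 : ENNReal.ofReal (2:ℝ) = 2 := by
    simp [ENNReal.ofReal_ofNat]
  have hmu : MemLp u (ENNReal.ofReal 2) μ := by
    rw [h2]; exact (memLp_two_iff_integrable_sq hu).2 hu2
  have hmv : MemLp v (ENNReal.ofReal 2) μ := by
    rw [h2]; exact (memLp_two_iff_integrable_sq hv).2 hv2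
  have key := integral_mul_norm_le_Lp_mul_Lq hpq hmu hmv
  have e1 : ∀ w : ℝ → ℝ, (fun a => ‖w a‖ ^ (2:ℝ)) = fun a => w a ^ 2 := by
    intro w; funext a
    rw [show (2:ℝ) = ((2:ℕ):ℝ) by norm_num, Real.rpow_natCast, Real.norm_eq_abs, sq_abs]
  rw [e1 u, e1 v] at key
  have e2 : ∀ w : ℝ → ℝ, (∫ x, w x ^ 2 ∂μ) ^ ((1:ℝ)/2) = Real.sqrt (∫ x, w x ^ 2 ∂μ) := by
    intro w
    rw [Real.sqrt_eq_rpow]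
  rw [e2 u, e2 v] at key
  calc ∫ x, |u x * v x| ∂μ = ∫ x, ‖u x‖ * ‖v x‖ ∂μ := by
        congr 1; funext x; rw [abs_mul, Real.norm_eq_abs, Real.norm_eq_abs]
    _ ≤ _ := key

private lemma sq_integral_eq {f' : ℝ → ℝ} {a b : ℝ}
    (hi : IntegrableOn f' (Set.Ioc a b)) :
    (∫ t in Set.Ioc a b, f' t) ^ 2
      = 2 * ∫ t in Set.Ioc a b, f' t * ∫ s in Set.Ioc a t, f' s := by
  set ν := (volume : Measure ℝ).restrict (Set.Ioc a b) with hν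
  have hiν : Integrable f' ν := hi
  have hF : Integrable (fun z : ℝ × ℝ => f' z.1 * f' z.2) (ν.prod ν) := hiν.mul_prod hiν
  have hW1 : MeasurableSet {z : ℝ × ℝ | z.2 < z.1} :=
    measurableSet_lt measurable_snd measurable_fst
  have hW2 : MeasurableSet {z : ℝ × ℝ | z.1 ≤ z.2} :=
    measurableSet_le measurable_fst measurable_snd
  set F : ℝ × ℝ → ℝ := fun z => f' z.1 * f' z.2 with hFdef
  set H1 : ℝ × ℝ → ℝ := Set.indicator {z : ℝ × ℝ | z.2 < z.1} F with hH1
  set H2 : ℝ × ℝ → ℝ := Set.indicator {z : ℝ × ℝ | z.1 ≤ z.2} F with hH2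
  have hIH1 : Integrable H1 (ν.prod ν) := hF.indicator hW1
  have hIH2 : Integrable H2 (ν.prod ν) := hF.indicator hW2
  have hsum : ∀ z, H1 z + H2 z = F z := by
    intro z
    simp only [hH1, hH2, Set.indicator_apply, Set.mem_setOf_eq]
    rcases lt_or_ge z.2 z.1 with h | h
    · rw [if_pos h, if_neg (not_le.2 h)]; ring
    · rw [if_neg (not_lt.2 h), if_pos h]; ring
  -- evaluate ∫ H1
  have e1 : ∫ z, H1 z ∂(ν.prod ν) = ∫ t in Set.Ioc a b, f' t * ∫ s in Set.Ioc a t, f' s := by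
    rw [integral_prod _ hIH1, hν]
    refine setIntegral_congr_ae measurableSet_Ioc (Filter.Eventually.of_forall ?_)
    intro x hx
    have hptw : ∀ y, H1 (x, y) = Set.indicator (Set.Iio x) (fun y => f' x * f' y) y := by
      intro y
      simp only [hH1, Set.indicator_apply, Set.mem_setOf_eq, Set.mem_Iio]
      rfl
    simp only [hptw]
    rw [integral_indicator measurableSet_Iio, Measure.restrict_restrict measurableSet_Iio,
      integral_const_mul]
    congr 1
    have hset : Set.Iio x ∩ Set.Ioc a b = Set.Ioo a x := by
      ext t
      simp only [Set.mem_inter_iff, Set.mem_Iio, Set.mem_Ioc, Set.mem_Ioo]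
      constructor
      · rintro ⟨h1, h2, h3⟩; exact ⟨h2, h1⟩
      · rintro ⟨h1, h2⟩; exact ⟨h2, h1, le_trans h2.le hx.2⟩
    rw [hset, ← integral_Ioc_eq_integral_Ioo]
  -- evaluate ∫ H2
  have e2 : ∫ z, H2 z ∂(ν.prod ν) = ∫ t in Set.Ioc a b, f' t * ∫ s in Set.Ioc a t, f' s := by
    rw [integral_prod_symm _ hIH2, hν]
    refine setIntegral_congr_ae measurableSet_Ioc (Filter.Eventually.of_forall ?_)
    intro y hy
    have hptw : ∀ x, H2 (x, y) = Set.indicator (Set.Iic y) (fun x => f' x * f' y) x := by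
      intro x
      simp only [hH2, Set.indicator_apply, Set.mem_setOf_eq, Set.mem_Iic]
      rfl
    simp only [hptw]
    rw [integral_indicator measurableSet_Iic, Measure.restrict_restrict measurableSet_Iic,
      integral_mul_const, mul_comm]
    congr 1
    have hset : Set.Iic y ∩ Set.Ioc a b = Set.Ioc a y := by
      ext t
      simp only [Set.mem_inter_iff, Set.mem_Iic, Set.mem_Ioc]
      constructor
      · rintro ⟨h1, h2, h3⟩; exact ⟨h2, h1⟩
      · rintro ⟨h1, h2⟩; exact ⟨h2, h1, le_trans h2 hy.2⟩
    rw [hset]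
  -- combine
  have e3 : ∫ z, F z ∂(ν.prod ν) = (∫ t in Set.Ioc a b, f' t) ^ 2 := by
    rw [hFdef, integral_prod_mul, pow_two]
  have e4 : ∫ z, F z ∂(ν.prod ν) = ∫ z, H1 z ∂(ν.prod ν) + ∫ z, H2 z ∂(ν.prod ν) := by
    rw [← integral_add hIH1 hIH2]
    congr 1; funext z; rw [hsum]
  rw [← e3, e4, e1, e2]; ring

private lemma sq_ftc {f f' : ℝ → ℝ} {a b : ℝ} (hab : a ≤ b)
    (hc : ContinuousOn f (Set.Icc a b))
    (hi : IntegrableOn f' (Set.Ioc a b))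
    (hf : ∀ t ∈ Set.Icc a b, f t = f a + ∫ s in Set.Ioc a t, f' s) :
    f b ^ 2 = f a ^ 2 + 2 * ∫ t in Set.Ioc a b, f t * f' t := by
  have key := sq_integral_eq hi
  -- rewrite the right-hand side using f t - f a = ∫_{Ioc a t} f'
  have key2 : (∫ t in Set.Ioc a b, f' t) ^ 2
      = 2 * ∫ t in Set.Ioc a b, f' t * (f t - f a) := by
    rw [key]
    congr 1
    refine setIntegral_congr_ae measurableSet_Ioc (Filter.Eventually.of_forall ?_)
    intro t ht
    rw [hf t ⟨ht.1.le, ht.2⟩]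
    ring
  -- integrability of f * f'
  obtain ⟨C, hC⟩ := isCompact_Icc.exists_bound_of_continuousOn hc
  have hfa : AEStronglyMeasurable f ((volume : Measure ℝ).restrict (Set.Ioc a b)) :=
    (hc.mono Set.Ioc_subset_Icc_self).aestronglyMeasurable measurableSet_Ioc
  have hff' : IntegrableOn (fun t => f t * f' t) (Set.Ioc a b) := by
    refine Integrable.bdd_mul (c := C) (hi : Integrable _ _) hfa ?_
    filter_upwards [ae_restrict_mem measurableSet_Ioc] with t ht
    exact hC t ⟨ht.1.le, ht.2⟩
  have hcf' : IntegrableOn (fun t => f a * f' t) (Set.Ioc a b) :=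
    (hi : Integrable _ _).const_mul _
  have hsub : ∫ t in Set.Ioc a b, f' t * (f t - f a)
      = (∫ t in Set.Ioc a b, f t * f' t) - f a * ∫ t in Set.Ioc a b, f' t := by
    have : (fun t => f' t * (f t - f a)) = fun t => f t * f' t - f a * f' t := by
      funext t; ring
    rw [this, integral_sub hff' hcf', integral_const_mul]
  have hfb : f b = f a + ∫ t in Set.Ioc a b, f' t := hf b ⟨hab, le_rfl⟩
  rw [hsub] at key2
  rw [hfb]
  linear_combination key2

private lemma hl_f_aesm {p : ℝ} {f f' : ℝ → ℝ} (h : H1HalfLine p f f') :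
    AEStronglyMeasurable f ((volume : Measure ℝ).restrict (Set.Ioi 0)) :=
  (h.1.mono Set.Ioi_subset_Ici_self).aestronglyMeasurable measurableSet_Ioi

private lemma hl_f'_aesm {p : ℝ} {f f' : ℝ → ℝ} (h : H1HalfLine p f f') :
    AEStronglyMeasurable f' ((volume : Measure ℝ).restrict (Set.Ioi 0)) := by
  have hUnion : (Set.Ioi (0:ℝ)) = ⋃ n : ℕ, Set.Ioc (0:ℝ) n := by
    ext t
    simp only [Set.mem_Ioi, Set.mem_iUnion, Set.mem_Ioc]
    constructor
    · intro ht; obtain ⟨n, hn⟩ := exists_nat_ge t; exact ⟨n, ht, hn⟩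
    · rintro ⟨n, ht, _⟩; exact ht
  rw [hUnion]
  exact aestronglyMeasurable_iUnion_iff.2 fun n =>
    ((h.2.1 0 n le_rfl n.cast_nonneg).1).aestronglyMeasurable

private lemma hl_prod_int {p : ℝ} {f f' : ℝ → ℝ} (h : H1HalfLine p f f') :
    IntegrableOn (fun t => f t * f' t) (Set.Ioi (0:ℝ)) := by
  refine Integrable.mono'
    (((h.2.2.2.1.add h.2.2.2.2.2).div_const 2 : IntegrableOn _ _ _))
    ((hl_f_aesm h).mul (hl_f'_aesm h)) ?_
  refine Filter.Eventually.of_forall fun t => ?_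
  rw [Real.norm_eq_abs, abs_mul]
  simp only [Pi.add_apply]
  nlinarith [sq_nonneg (|f t| - |f' t|), abs_nonneg (f t), abs_nonneg (f' t),
    sq_abs (f t), sq_abs (f' t)]

private lemma halfline_bound {p : ℝ} {f f' : ℝ → ℝ} (h : H1HalfLine p f f') {x : ℝ}
    (hx : 0 ≤ x) :
    f x ^ 2 ≤ 2 * ∫ t in Set.Ioi (0:ℝ), |f t * f' t| := by
  have hprod := hl_prod_int h
  have habs : IntegrableOn (fun t => |f t * f' t|) (Set.Ioi (0:ℝ)) := hprod.abs
  -- the FTC identity on [y, R]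
  have hId : ∀ y z : ℝ, 0 ≤ y → y ≤ z →
      f z ^ 2 = f y ^ 2 + 2 * ∫ t in Set.Ioc y z, f t * f' t := by
    intro y z hy hyz
    refine sq_ftc hyz (h.1.mono fun t ht => hy.trans ht.1)
      ((h.2.1 y z hy (hy.trans hyz)).1) ?_
    intro t ht
    have := h.2.2.1 y t hy (hy.trans ht.1)
    rwa [intervalIntegral.integral_of_le ht.1] at this
  -- the limits of the tail integrals
  have hlim : ∀ y : ℝ, 0 ≤ y →
      Tendsto (fun R => ∫ t in Set.Ioc y R, f t * f' t) atTop
        (nhds (∫ t in Set.Ioi y, f t * f' t)) := by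
    intro y hy
    have h1 := MeasureTheory.intervalIntegral_tendsto_integral_Ioi y
      (hprod.mono_set (Set.Ioi_subset_Ioi hy)) tendsto_id
    refine h1.congr' ?_
    filter_upwards [eventually_ge_atTop y] with R hR
    simp only [id_eq]
    rw [intervalIntegral.integral_of_le hR]
  -- f R ^ 2 converges to L
  have hsqlim : ∀ y : ℝ, 0 ≤ y →
      Tendsto (fun R => f R ^ 2) atTop
        (nhds (f y ^ 2 + 2 * ∫ t in Set.Ioi y, f t * f' t)) := by
    intro y hy
    refine Tendsto.congr' ?_ (((hlim y hy).const_mul 2).const_add (f y ^ 2))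
    filter_upwards [eventually_ge_atTop y] with R hR
    exact (hId y R hy hR).symm
  set L := f 0 ^ 2 + 2 * ∫ t in Set.Ioi (0:ℝ), f t * f' t with hLdef
  have hL0 : Tendsto (fun R => f R ^ 2) atTop (nhds L) := hsqlim 0 le_rfl
  -- L = 0
  have hLnn : 0 ≤ L := ge_of_tendsto hL0 (Filter.Eventually.of_forall fun R => sq_nonneg _)
  have hLzero : L = 0 := by
    by_contra hne
    have hpos : 0 < L := lt_of_le_of_ne hLnn (Ne.symm hne)
    have hev : ∀ᶠ R in atTop, L / 2 ≤ f R ^ 2 :=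
      hL0.eventually (eventually_ge_nhds (by linarith))
    obtain ⟨R₀, hR₀⟩ := hev.exists_forall_of_atTop
    set R₁ := max R₀ 0 with hR₁def
    have hconst : IntegrableOn (fun _ : ℝ => L / 2) (Set.Ioi R₁) := by
      refine Integrable.mono'
        (h.2.2.2.1.mono_set (Set.Ioi_subset_Ioi (le_max_right _ _)))
        aestronglyMeasurable_const ?_
      filter_upwards [ae_restrict_mem measurableSet_Ioi] with t ht
      rw [Real.norm_of_nonneg (by linarith)]
      exact hR₀ t ((le_max_left _ _).trans ht.le)
    have := (integrable_const_iff (c := L / 2)).1 hconst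
    rcases this with hc | hc
    · linarith
    · have hc := hc.measure_univ_lt_top
      rw [Measure.restrict_apply_univ, Real.volume_Ioi] at hc
      exact absurd hc (by simp)
  -- conclude
  have hx0 : f x ^ 2 + 2 * ∫ t in Set.Ioi x, f t * f' t = 0 := by
    have := tendsto_nhds_unique (hsqlim x hx) hL0
    rw [this, hLzero]
  have h1 : f x ^ 2 = - (2 * ∫ t in Set.Ioi x, f t * f' t) := by linarith
  have h2 : |∫ t in Set.Ioi x, f t * f' t| ≤ ∫ t in Set.Ioi x, |f t * f' t| := by
    simpa [Real.norm_eq_abs, abs_mul] using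
      norm_integral_le_integral_norm (μ := (volume : Measure ℝ).restrict (Set.Ioi x))
        (fun t => f t * f' t)
  have h3 : ∫ t in Set.Ioi x, |f t * f' t| ≤ ∫ t in Set.Ioi (0:ℝ), |f t * f' t| := by
    refine setIntegral_mono_set habs ?_ ?_
    · exact Filter.Eventually.of_forall fun t => abs_nonneg _
    · exact HasSubset.Subset.eventuallyLE (Set.Ioi_subset_Ioi hx)
  have h4 := abs_le.1 h2
  linarith [h4.1, h4.2]

private lemma ed_f_aesm {p ℓ : ℝ} {g g' : ℝ → ℝ} (h : H1Edge p ℓ g g') (hℓ : 0 ≤ ℓ) :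
    AEStronglyMeasurable g ((volume : Measure ℝ).restrict (Set.Ioo 0 ℓ)) :=
  (h.1.mono Set.Ioo_subset_Icc_self).aestronglyMeasurable measurableSet_Ioo

private lemma ed_f'_aesm {p ℓ : ℝ} {g g' : ℝ → ℝ} (h : H1Edge p ℓ g g') (hℓ : 0 ≤ ℓ) :
    AEStronglyMeasurable g' ((volume : Measure ℝ).restrict (Set.Ioo 0 ℓ)) :=
  (((h.2.1 0 ⟨le_rfl, hℓ⟩ ℓ ⟨hℓ, le_rfl⟩).1).mono_set
    Set.Ioo_subset_Ioc_self).aestronglyMeasurable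

private lemma ed_prod_int {p ℓ : ℝ} {g g' : ℝ → ℝ} (h : H1Edge p ℓ g g') (hℓ : 0 ≤ ℓ) :
    IntegrableOn (fun t => g t * g' t) (Set.Ioo (0:ℝ) ℓ) := by
  refine Integrable.mono'
    (((h.2.2.2.1.add h.2.2.2.2.2).div_const 2 : IntegrableOn _ _ _))
    ((ed_f_aesm h hℓ).mul (ed_f'_aesm h hℓ)) ?_
  refine Filter.Eventually.of_forall fun t => ?_
  rw [Real.norm_eq_abs, abs_mul]
  simp only [Pi.add_apply]
  nlinarith [sq_nonneg (|g t| - |g' t|), abs_nonneg (g t), abs_nonneg (g' t),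
    sq_abs (g t), sq_abs (g' t)]

private lemma edge_bound {p ℓ : ℝ} {g g' : ℝ → ℝ} (h : H1Edge p ℓ g g') {x : ℝ}
    (hx : x ∈ Set.Icc 0 ℓ) :
    g x ^ 2 ≤ g 0 ^ 2 + 2 * ∫ t in Set.Ioo 0 ℓ, |g t * g' t| := by
  have hℓ : (0:ℝ) ≤ ℓ := hx.1.trans hx.2
  have h0 : (0:ℝ) ∈ Set.Icc (0:ℝ) ℓ := ⟨le_rfl, hℓ⟩
  have habs : IntegrableOn (fun t => |g t * g' t|) (Set.Ioo (0:ℝ) ℓ) := (ed_prod_int h hℓ).abs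
  -- FTC identity on [0, x]
  have hId : g x ^ 2 = g 0 ^ 2 + 2 * ∫ t in Set.Ioc 0 x, g t * g' t := by
    refine sq_ftc hx.1 (h.1.mono (Set.Icc_subset_Icc_right hx.2))
      ((h.2.1 0 h0 x hx).1) ?_
    intro t ht
    have := h.2.2.1 0 h0 t ⟨ht.1, ht.2.trans hx.2⟩
    rwa [intervalIntegral.integral_of_le ht.1] at this
  -- gg' integrable on Ioc 0 x
  have hix : IntegrableOn (fun t => g t * g' t) (Set.Ioc 0 x) := by
    obtain ⟨C, hC⟩ := isCompact_Icc.exists_bound_of_continuousOn h.1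
    refine Integrable.bdd_mul (c := C) ((h.2.1 0 h0 x hx).1)
      (((h.1.mono (Set.Ioc_subset_Icc_self.trans (Set.Icc_subset_Icc_right hx.2))).aestronglyMeasurable
        measurableSet_Ioc)) ?_
    filter_upwards [ae_restrict_mem measurableSet_Ioc] with t ht
    exact hC t ⟨ht.1.le, ht.2.trans hx.2⟩
  have h1 : ∫ t in Set.Ioc 0 x, g t * g' t ≤ ∫ t in Set.Ioc 0 x, |g t * g' t| :=
    integral_mono hix hix.abs fun t => le_abs_self _
  have h2 : ∫ t in Set.Ioc 0 x, |g t * g' t| ≤ ∫ t in Set.Ioo 0 ℓ, |g t * g' t| := by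
    refine setIntegral_mono_set habs
      (Filter.Eventually.of_forall fun t => abs_nonneg _) ?_
    rw [MeasureTheory.ae_le_set]
    refine measure_mono_null ?_ (measure_singleton ℓ)
    rintro t ⟨⟨ht0, htx⟩, hnot⟩
    simp only [Set.mem_Ioo, not_and, not_lt] at hnot
    have := hnot ht0
    have : t = ℓ := le_antisymm (htx.trans hx.2) this
    simpa using this
  linarith

private lemma two_cs {A B C D : ℝ} (hA : 0 ≤ A) (hB : 0 ≤ B) (hC : 0 ≤ C) (hD : 0 ≤ D) :
    Real.sqrt A * Real.sqrt B + Real.sqrt C * Real.sqrt D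
      ≤ Real.sqrt (A + C) * Real.sqrt (B + D) := by
  have h1 : (Real.sqrt A * Real.sqrt B + Real.sqrt C * Real.sqrt D) ^ 2
      ≤ (Real.sqrt (A + C) * Real.sqrt (B + D)) ^ 2 := by
    nlinarith [sq_nonneg (Real.sqrt A * Real.sqrt D - Real.sqrt C * Real.sqrt B),
      Real.sq_sqrt hA, Real.sq_sqrt hB, Real.sq_sqrt hC, Real.sq_sqrt hD,
      Real.sq_sqrt (add_nonneg hA hC), Real.sq_sqrt (add_nonneg hB hD),
      Real.sqrt_nonneg A, Real.sqrt_nonneg B, Real.sqrt_nonneg C, Real.sqrt_nonneg D,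
      mul_nonneg (Real.sqrt_nonneg A) (Real.sqrt_nonneg B),
      mul_nonneg (Real.sqrt_nonneg C) (Real.sqrt_nonneg D)]
  have h2 : 0 ≤ Real.sqrt A * Real.sqrt B + Real.sqrt C * Real.sqrt D := by positivity
  calc Real.sqrt A * Real.sqrt B + Real.sqrt C * Real.sqrt D
      = Real.sqrt ((Real.sqrt A * Real.sqrt B + Real.sqrt C * Real.sqrt D) ^ 2) :=
        (Real.sqrt_sq h2).symm
    _ ≤ Real.sqrt ((Real.sqrt (A + C) * Real.sqrt (B + D)) ^ 2) := Real.sqrt_le_sqrt h1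
    _ = Real.sqrt (A + C) * Real.sqrt (B + D) := Real.sqrt_sq (by positivity)

/-- universal `L^∞` bound, inequality (8): on every star graph `G`
with at least one half-line, `‖u‖_{L^∞(G)}² ≤ 2 ‖u‖_{L²(G)} ‖u'‖_{L²(G)}`. -/
theorem sup_norm_sq_le_on_graphs (p : ℝ) (hp₁ : 2 < p) (hp₂ : p < 6)
    (G : StarGraph) (hm : 1 ≤ G.m) (u : GraphFun G) (hu : InH1G p G u) :
    supNormG G u ^ 2 ≤ 2 * Real.sqrt (massG G u) * Real.sqrt (kinG G u) := by
  obtain ⟨hH, hE, hff, hfg, hgg⟩ := hu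
  set A : Fin G.m → ℝ := fun i => ∫ t in Set.Ioi (0:ℝ), (u.f i t) ^ 2 with hA
  set B : Fin G.m → ℝ := fun i => ∫ t in Set.Ioi (0:ℝ), (u.f' i t) ^ 2 with hB
  set C : Fin G.k → ℝ := fun j => ∫ t in Set.Ioo 0 (G.ℓ j), (u.g j t) ^ 2 with hC
  set D : Fin G.k → ℝ := fun j => ∫ t in Set.Ioo 0 (G.ℓ j), (u.g' j t) ^ 2 with hD
  have hAnn : ∀ i, 0 ≤ A i := fun i => integral_nonneg fun t => sq_nonneg _
  have hBnn : ∀ i, 0 ≤ B i := fun i => integral_nonneg fun t => sq_nonneg _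
  have hCnn : ∀ j, 0 ≤ C j := fun j => integral_nonneg fun t => sq_nonneg _
  have hDnn : ∀ j, 0 ≤ D j := fun j => integral_nonneg fun t => sq_nonneg _
  have hMass : massG G u = (∑ i, A i) + ∑ j, C j := rfl
  have hKin : kinG G u = (∑ i, B i) + ∑ j, D j := rfl
  have hM0 : 0 ≤ massG G u := by
    rw [hMass]
    exact add_nonneg (Finset.sum_nonneg fun i _ => hAnn i)
      (Finset.sum_nonneg fun j _ => hCnn j)
  have hK0 : 0 ≤ kinG G u := by
    rw [hKin]
    exact add_nonneg (Finset.sum_nonneg fun i _ => hBnn i)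
      (Finset.sum_nonneg fun j _ => hDnn j)
  set K := 2 * Real.sqrt (massG G u) * Real.sqrt (kinG G u) with hKdef
  have hKnn : 0 ≤ K := by positivity
  have i0 : Fin G.m := ⟨0, hm⟩
  have hAle : ∀ i, A i ≤ massG G u := by
    intro i
    have h1 : A i ≤ ∑ i', A i' :=
      Finset.single_le_sum (fun i' _ => hAnn i') (Finset.mem_univ i)
    have h2 : (0:ℝ) ≤ ∑ j, C j := Finset.sum_nonneg fun j _ => hCnn j
    rw [hMass]; linarith
  have hBle : ∀ i, B i ≤ kinG G u := by
    intro i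
    have h1 : B i ≤ ∑ i', B i' :=
      Finset.single_le_sum (fun i' _ => hBnn i') (Finset.mem_univ i)
    have h2 : (0:ℝ) ≤ ∑ j, D j := Finset.sum_nonneg fun j _ => hDnn j
    rw [hKin]; linarith
  have hACle : ∀ j, A i0 + C j ≤ massG G u := by
    intro j
    have h1 : A i0 ≤ ∑ i', A i' :=
      Finset.single_le_sum (fun i' _ => hAnn i') (Finset.mem_univ i0)
    have h2 : C j ≤ ∑ j', C j' :=
      Finset.single_le_sum (fun j' _ => hCnn j') (Finset.mem_univ j)
    rw [hMass]; linarith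
  have hBDle : ∀ j, B i0 + D j ≤ kinG G u := by
    intro j
    have h1 : B i0 ≤ ∑ i', B i' :=
      Finset.single_le_sum (fun i' _ => hBnn i') (Finset.mem_univ i0)
    have h2 : D j ≤ ∑ j', D j' :=
      Finset.single_le_sum (fun j' _ => hDnn j') (Finset.mem_univ j)
    rw [hKin]; linarith
  -- Cauchy-Schwarz on each edge
  have hcsf : ∀ i, ∫ t in Set.Ioi (0:ℝ), |u.f i t * u.f' i t|
      ≤ Real.sqrt (A i) * Real.sqrt (B i) := fun i =>
    cs_integral (hl_f_aesm (hH i)) (hl_f'_aesm (hH i)) (hH i).2.2.2.1 (hH i).2.2.2.2.2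
  have hcsg : ∀ j, ∫ t in Set.Ioo 0 (G.ℓ j), |u.g j t * u.g' j t|
      ≤ Real.sqrt (C j) * Real.sqrt (D j) := fun j =>
    cs_integral (ed_f_aesm (hE j) (G.ℓ_pos j).le) (ed_f'_aesm (hE j) (G.ℓ_pos j).le)
      (hE j).2.2.2.1 (hE j).2.2.2.2.2
  -- pointwise bounds
  have hb1 : ∀ (i : Fin G.m) (x : ℝ), 0 ≤ x → (u.f i x) ^ 2 ≤ K := by
    intro i x hx
    have h1 := halfline_bound (hH i) hx
    have h3 : Real.sqrt (A i) * Real.sqrt (B i)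
        ≤ Real.sqrt (massG G u) * Real.sqrt (kinG G u) :=
      mul_le_mul (Real.sqrt_le_sqrt (hAle i)) (Real.sqrt_le_sqrt (hBle i))
        (Real.sqrt_nonneg _) (Real.sqrt_nonneg _)
    have := hcsf i
    rw [hKdef]; linarith
  have hb2 : ∀ (j : Fin G.k) (x : ℝ), x ∈ Set.Icc 0 (G.ℓ j) → (u.g j x) ^ 2 ≤ K := by
    intro j x hx
    have h1 := edge_bound (hE j) hx
    have h0 : (u.g j 0) ^ 2 = (u.f i0 0) ^ 2 := by rw [← hfg i0 j]
    have h2 := halfline_bound (hH i0) (le_refl (0:ℝ))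
    have h5 : Real.sqrt (A i0) * Real.sqrt (B i0) + Real.sqrt (C j) * Real.sqrt (D j)
        ≤ Real.sqrt (A i0 + C j) * Real.sqrt (B i0 + D j) :=
      two_cs (hAnn i0) (hBnn i0) (hCnn j) (hDnn j)
    have h6 : Real.sqrt (A i0 + C j) * Real.sqrt (B i0 + D j)
        ≤ Real.sqrt (massG G u) * Real.sqrt (kinG G u) :=
      mul_le_mul (Real.sqrt_le_sqrt (hACle j)) (Real.sqrt_le_sqrt (hBDle j))
        (Real.sqrt_nonneg _) (Real.sqrt_nonneg _)
    have h7 := hcsf i0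
    have h8 := hcsg j
    rw [hKdef]; linarith
  -- the sup
  have hub : ∀ y ∈ ({ y | ∃ i : Fin G.m, ∃ x ≥ (0:ℝ), y = |u.f i x| } ∪
      { y | ∃ j : Fin G.k, ∃ x ∈ Icc 0 (G.ℓ j), y = |u.g j x| }), y ≤ Real.sqrt K := by
    intro y hy
    have hy2 : y ^ 2 ≤ K ∧ 0 ≤ y := by
      rcases hy with hy | hy
      · obtain ⟨i, x, hx, rfl⟩ := hy
        exact ⟨by rw [sq_abs]; exact hb1 i x hx, abs_nonneg _⟩
      · obtain ⟨j, x, hx, rfl⟩ := hy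
        exact ⟨by rw [sq_abs]; exact hb2 j x hx, abs_nonneg _⟩
    calc y = Real.sqrt (y ^ 2) := (Real.sqrt_sq hy2.2).symm
      _ ≤ Real.sqrt K := Real.sqrt_le_sqrt hy2.1
  have hel : |u.f i0 0| ∈ ({ y | ∃ i : Fin G.m, ∃ x ≥ (0:ℝ), y = |u.f i x| } ∪
      { y | ∃ j : Fin G.k, ∃ x ∈ Icc 0 (G.ℓ j), y = |u.g j x| }) :=
    Or.inl ⟨i0, 0, le_rfl, rfl⟩
  have hne : ({ y | ∃ i : Fin G.m, ∃ x ≥ (0:ℝ), y = |u.f i x| } ∪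
      { y | ∃ j : Fin G.k, ∃ x ∈ Icc 0 (G.ℓ j), y = |u.g j x| }).Nonempty := ⟨_, hel⟩
  have hbdd : BddAbove ({ y | ∃ i : Fin G.m, ∃ x ≥ (0:ℝ), y = |u.f i x| } ∪
      { y | ∃ j : Fin G.k, ∃ x ∈ Icc 0 (G.ℓ j), y = |u.g j x| }) := ⟨Real.sqrt K, hub⟩
  have hle : supNormG G u ≤ Real.sqrt K := csSup_le hne hub
  have hge : 0 ≤ supNormG G u := le_trans (abs_nonneg _) (le_csSup hbdd hel)
  calc supNormG G u ^ 2 ≤ Real.sqrt K ^ 2 := pow_le_pow_left₀ hge hle 2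
    _ = K := Real.sq_sqrt hKnn
end
end

section
/- Let p ∈ (2,6) and β = (p−2)/(6−p). There exists a constant C_p > 0, depending only on p, with the following property: for every star graph G with at least one half-line (m ≥ 1), every μ > 0 and every u ∈ H¹_μ(G) with E(u,G) ≤ ½ E_G(μ), one has C_p^{-1} μ^{2β+1} ≤ ‖u′‖²_{L²(G)} ≤ C_p μ^{2β+1}, C_p^{-1} μ^{2β+1} ≤ ‖u‖^p_{L^p(G)} ≤ C_p μ^{2β+1}, and C_p^{-1} μ^{β+1} ≤ ‖u‖²_{L^∞(G)} ≤ C_p μ^{β+1}. -/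
open MeasureTheory Filter Set

noncomputable section

namespace UAPE

/-- The profile function `φ(x) = x e^{-x}`. -/
def phi (x : ℝ) : ℝ := x * Real.exp (-x)

/-- Derivative of `phi`. -/
def phi' (x : ℝ) : ℝ := (1 - x) * Real.exp (-x)

lemma phi_hasDerivAt (x : ℝ) : HasDerivAt phi (phi' x) x := by
  have h1 : HasDerivAt (fun x : ℝ => Real.exp (-x)) (-Real.exp (-x)) x := by
    simpa using (hasDerivAt_neg x).exp
  have h2 := (hasDerivAt_id x).mul h1
  exact h2.congr_deriv (by simp only [phi', id]; ring)

lemma phi_continuous : Continuous phi :=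
  continuous_id.mul (Real.continuous_exp.comp continuous_neg)

lemma phi'_continuous : Continuous phi' :=
  ((continuous_const.sub continuous_id)).mul (Real.continuous_exp.comp continuous_neg)

lemma exp_sq_aux {x : ℝ} (hx : 0 ≤ x) : x ^ 2 ≤ 4 * Real.exp x := by
  have h1 := Real.add_one_le_exp (x / 2)
  have h2 : Real.exp (x / 2) * Real.exp (x / 2) = Real.exp x := by
    rw [← Real.exp_add]; ring_nf
  nlinarith [Real.exp_pos (x / 2)]

lemma phi_sq_le {x : ℝ} (hx : 0 ≤ x) : (phi x) ^ 2 ≤ 4 * Real.exp (-x) := by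
  have h := exp_sq_aux hx
  have e1 : Real.exp x * Real.exp (-x) = 1 := by rw [← Real.exp_add]; simp
  have e2 : (0 : ℝ) < Real.exp (-x) := Real.exp_pos _
  have e3 : (phi x) ^ 2 = x ^ 2 * (Real.exp (-x)) ^ 2 := by rw [phi]; ring
  rw [e3]
  nlinarith [sq_nonneg (Real.exp (-x))]

lemma phi'_sq_le {x : ℝ} (hx : 0 ≤ x) : (phi' x) ^ 2 ≤ 4 * Real.exp (-x) := by
  have h := exp_sq_aux hx
  have e1 : Real.exp x * Real.exp (-x) = 1 := by rw [← Real.exp_add]; simp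
  have e2 : (0 : ℝ) < Real.exp (-x) := Real.exp_pos _
  have e3 : (phi' x) ^ 2 = (1 - x) ^ 2 * (Real.exp (-x)) ^ 2 := by rw [phi']; ring
  have e4 : (1 - x) ^ 2 ≤ 4 * Real.exp x := by
    have h1 := Real.add_one_le_exp (x / 2)
    have h2 : Real.exp (x / 2) * Real.exp (x / 2) = Real.exp x := by
      rw [← Real.exp_add]; ring_nf
    nlinarith [Real.exp_pos (x / 2)]
  rw [e3]
  nlinarith [sq_nonneg (Real.exp (-x))]

lemma phi_nonneg {x : ℝ} (hx : 0 ≤ x) : 0 ≤ phi x :=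
  mul_nonneg hx (Real.exp_pos _).le

lemma phi_le_one (x : ℝ) : phi x ≤ 1 := by
  rcases le_or_gt x 0 with h | h
  · have : phi x ≤ 0 := mul_nonpos_of_nonpos_of_nonneg h (Real.exp_pos _).le
    linarith
  · have h1 := Real.add_one_le_exp x
    have e2 : (0 : ℝ) < Real.exp (-x) := Real.exp_pos _
    have e1 : Real.exp x * Real.exp (-x) = 1 := by rw [← Real.exp_add]; simp
    rw [phi]
    nlinarith

lemma phi_rpow_le {p x : ℝ} (hp : 2 ≤ p) (hx : 0 ≤ x) :
    |phi x| ^ p ≤ 4 * Real.exp (-x) := by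
  have habs : |phi x| = phi x := abs_of_nonneg (phi_nonneg hx)
  rcases eq_or_lt_of_le (phi_nonneg hx) with h0 | h0
  · rw [habs, ← h0, Real.zero_rpow (by linarith)]
    positivity
  · have h1 : phi x ^ p ≤ phi x ^ (2 : ℝ) :=
      Real.rpow_le_rpow_of_exponent_ge h0 (phi_le_one x) hp
    rw [habs]
    calc phi x ^ p ≤ phi x ^ (2 : ℝ) := h1
      _ = phi x ^ 2 := by rw [Real.rpow_two]
      _ ≤ 4 * Real.exp (-x) := phi_sq_le hx

lemma integrableOn_of_exp_bound {f : ℝ → ℝ} {c lam : ℝ} (hlam : 0 < lam)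
    (hm : AEStronglyMeasurable f (volume.restrict (Ioi 0)))
    (h : ∀ x ∈ Ioi (0 : ℝ), |f x| ≤ c * Real.exp (-(lam * x))) :
    IntegrableOn f (Ioi 0) := by
  have hg : IntegrableOn (fun x => c * Real.exp (-(lam * x))) (Ioi 0) := by
    simpa [neg_mul, IntegrableOn] using (exp_neg_integrableOn_Ioi 0 hlam).const_mul c
  exact hg.integrable.mono' hm
    ((ae_restrict_iff' measurableSet_Ioi).mpr (Eventually.of_forall fun x hx => by
      simpa [Real.norm_eq_abs] using h x hx))

def Qphi : ℝ := ∫ x in Ioi (0 : ℝ), (phi x) ^ 2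
def Kphi : ℝ := ∫ x in Ioi (0 : ℝ), (phi' x) ^ 2
def Pphi (p : ℝ) : ℝ := ∫ x in Ioi (0 : ℝ), |phi x| ^ p

lemma integrableOn_phi_sq : IntegrableOn (fun x => (phi x) ^ 2) (Ioi 0) :=
  integrableOn_of_exp_bound one_pos
    ((phi_continuous.pow 2).aestronglyMeasurable.restrict)
    (fun x hx => by
      rw [abs_of_nonneg (sq_nonneg _)]
      simpa using phi_sq_le (le_of_lt hx))

lemma integrableOn_phi'_sq : IntegrableOn (fun x => (phi' x) ^ 2) (Ioi 0) :=
  integrableOn_of_exp_bound one_pos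
    ((phi'_continuous.pow 2).aestronglyMeasurable.restrict)
    (fun x hx => by
      rw [abs_of_nonneg (sq_nonneg _)]
      simpa using phi'_sq_le (le_of_lt hx))

lemma integrableOn_phi_rpow {p : ℝ} (hp : 2 ≤ p) :
    IntegrableOn (fun x => |phi x| ^ p) (Ioi 0) :=
  integrableOn_of_exp_bound one_pos
    (((phi_continuous.abs).rpow_const (fun x => Or.inr (by linarith))).aestronglyMeasurable.restrict)
    (fun x hx => by
      rw [abs_of_nonneg (Real.rpow_nonneg (abs_nonneg _) _)]
      simpa using phi_rpow_le hp (le_of_lt hx))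


lemma setIntegral_pos_of_lower {f : ℝ → ℝ} (hint : IntegrableOn f (Ioi 0))
    (hnn : ∀ x ∈ Ioi (0 : ℝ), 0 ≤ f x) {c : ℝ} (hc : 0 < c)
    (hlb : ∀ x ∈ Ioo (1 : ℝ) 2, c ≤ f x) : 0 < ∫ x in Ioi (0 : ℝ), f x := by
  have hsub : Ioo (1 : ℝ) 2 ⊆ Ioi 0 := fun x hx => lt_trans one_pos hx.1
  have h1 : ∫ x in Ioo (1 : ℝ) 2, (c : ℝ) ≤ ∫ x in Ioo (1 : ℝ) 2, f x := by
    refine setIntegral_mono_on ?_ (hint.mono_set hsub) measurableSet_Ioo hlb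
    exact integrableOn_const (by simp [Real.volume_Ioo])
  have h2 : ∫ x in Ioo (1 : ℝ) 2, f x ≤ ∫ x in Ioi (0 : ℝ), f x := by
    refine setIntegral_mono_set hint ?_ hsub.eventuallyLE
    exact (ae_restrict_iff' measurableSet_Ioi).mpr (Eventually.of_forall hnn)
  have h3 : ∫ x in Ioo (1 : ℝ) 2, (c : ℝ) = c := by
    simp [Real.volume_Ioo]; norm_num
  linarith

lemma Qphi_pos : 0 < Qphi := by
  refine setIntegral_pos_of_lower integrableOn_phi_sq (fun x _ => sq_nonneg _)
    (Real.exp_pos (-4)) (fun x hx => ?_)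
  have h1 : Real.exp (-2) ≤ Real.exp (-x) := Real.exp_le_exp.mpr (by linarith [hx.2])
  have h2 : Real.exp (-2) * Real.exp (-2) = Real.exp (-4) := by
    rw [← Real.exp_add]; norm_num
  have hx1 : (1 : ℝ) ≤ x := hx.1.le
  rw [phi]
  have h5 : Real.exp (-x) ≤ x * Real.exp (-x) :=
    le_mul_of_one_le_left (Real.exp_pos _).le hx1
  nlinarith [Real.exp_pos (-2), Real.exp_pos (-x)]

lemma Pphi_pos {p : ℝ} (hp : 2 ≤ p) : 0 < Pphi p := by
  refine setIntegral_pos_of_lower (integrableOn_phi_rpow hp)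
    (fun x _ => Real.rpow_nonneg (abs_nonneg _) _)
    (c := Real.exp (-2 * p)) (Real.exp_pos _) (fun x hx => ?_)
  have hx1 : (1 : ℝ) ≤ x := hx.1.le
  have h0 : Real.exp (-2) ≤ phi x := by
    have h1 : Real.exp (-2) ≤ Real.exp (-x) := Real.exp_le_exp.mpr (by linarith [hx.2])
    have : Real.exp (-x) ≤ x * Real.exp (-x) := le_mul_of_one_le_left (Real.exp_pos _).le hx1
    rw [phi]; linarith
  have habs : Real.exp (-2) ≤ |phi x| := le_trans h0 (le_abs_self _)
  calc Real.exp (-2 * p) = Real.exp (-2) ^ p := Real.exp_mul (-2) p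
    _ ≤ |phi x| ^ p := Real.rpow_le_rpow (Real.exp_pos _).le habs (by linarith)

lemma H1HalfLine_zero {p : ℝ} (hp : p ≠ 0) :
    H1HalfLine p (fun _ => 0) (fun _ => 0) := by
  refine ⟨continuousOn_const, fun x y _ _ => intervalIntegrable_const,
    fun x y _ _ => by simp, ?_, ?_, ?_⟩
  · simpa using (integrableOn_zero (s := Ioi (0:ℝ)) (μ := volume))
  · have : (fun x : ℝ => |(0 : ℝ)| ^ p) = fun _ => (0 : ℝ) := by
      funext x; simp [Real.zero_rpow hp]
    rw [this]; exact integrableOn_zero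
  · simpa using (integrableOn_zero (s := Ioi (0:ℝ)) (μ := volume))

lemma H1Edge_zero {p ℓ : ℝ} (hp : p ≠ 0) :
    H1Edge p ℓ (fun _ => 0) (fun _ => 0) := by
  refine ⟨continuousOn_const, fun x _ y _ => intervalIntegrable_const,
    fun x _ y _ => by simp, ?_, ?_, ?_⟩
  · simpa using (integrableOn_zero (s := Ioo (0:ℝ) ℓ) (μ := volume))
  · have : (fun x : ℝ => |(0 : ℝ)| ^ p) = fun _ => (0 : ℝ) := by
      funext x; simp [Real.zero_rpow hp]
    rw [this]; exact integrableOn_zero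
  · simpa using (integrableOn_zero (s := Ioo (0:ℝ) ℓ) (μ := volume))

lemma test_hasDerivAt {A lam : ℝ} (x : ℝ) :
    HasDerivAt (fun x => A * phi (lam * x)) (A * lam * phi' (lam * x)) x := by
  have h1 : HasDerivAt (fun x : ℝ => lam * x) lam x := by
    simpa using (hasDerivAt_id x).const_mul lam
  have h2 := (phi_hasDerivAt (lam * x)).comp x h1
  have h3 := h2.const_mul A
  exact h3.congr_deriv (by ring)

lemma H1HalfLine_test {p A lam : ℝ} (hp2 : 2 ≤ p) (hA : 0 < A) (hlam : 0 < lam) :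
    H1HalfLine p (fun x => A * phi (lam * x)) (fun x => A * lam * phi' (lam * x)) := by
  have hcont : Continuous fun x => A * phi (lam * x) :=
    continuous_const.mul (phi_continuous.comp (continuous_const.mul continuous_id))
  have hcont' : Continuous fun x => A * lam * phi' (lam * x) :=
    continuous_const.mul (phi'_continuous.comp (continuous_const.mul continuous_id))
  refine ⟨hcont.continuousOn, fun x y _ _ => hcont'.intervalIntegrable x y,
    fun x y _ _ => ?_, ?_, ?_, ?_⟩
  · have := intervalIntegral.integral_eq_sub_of_hasDerivAt
      (f := fun x => A * phi (lam * x)) (f' := fun x => A * lam * phi' (lam * x))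
      (fun t _ => test_hasDerivAt t) (hcont'.intervalIntegrable x y)
    rw [this]; ring
  · refine integrableOn_of_exp_bound (c := 4 * A ^ 2) hlam
      ((hcont.pow 2).aestronglyMeasurable.restrict) (fun x hx => ?_)
    beta_reduce
    rw [abs_of_nonneg (sq_nonneg _), mul_pow]
    have := phi_sq_le (x := lam * x) (mul_nonneg hlam.le (le_of_lt hx))
    nlinarith [sq_nonneg A]
  · refine integrableOn_of_exp_bound (c := |A| ^ p * 4) hlam
      (((hcont.abs).rpow_const (fun x => Or.inr (by linarith))).aestronglyMeasurable.restrict)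
      (fun x hx => ?_)
    beta_reduce
    rw [abs_of_nonneg (Real.rpow_nonneg (abs_nonneg _) _), abs_mul,
      Real.mul_rpow (abs_nonneg _) (abs_nonneg _)]
    have h2 := phi_rpow_le (x := lam * x) hp2 (mul_nonneg hlam.le (le_of_lt hx))
    have h3 : (0:ℝ) ≤ |A| ^ p := Real.rpow_nonneg (abs_nonneg _) _
    calc |A| ^ p * |phi (lam * x)| ^ p ≤ |A| ^ p * (4 * Real.exp (-(lam * x))) :=
          mul_le_mul_of_nonneg_left h2 h3
      _ = |A| ^ p * 4 * Real.exp (-(lam * x)) := by ring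
  · refine integrableOn_of_exp_bound (c := 4 * (A * lam) ^ 2) hlam
      ((hcont'.pow 2).aestronglyMeasurable.restrict) (fun x hx => ?_)
    beta_reduce
    rw [abs_of_nonneg (sq_nonneg _), mul_pow]
    have := phi'_sq_le (x := lam * x) (mul_nonneg hlam.le (le_of_lt hx))
    nlinarith [sq_nonneg (A * lam)]

lemma integral_sq_scaled (A : ℝ) {lam : ℝ} (hlam : 0 < lam) :
    ∫ x in Ioi (0 : ℝ), (A * phi (lam * x)) ^ 2 = A ^ 2 * lam⁻¹ * Qphi := by
  have h := integral_comp_mul_left_Ioi (fun y => (A * phi y) ^ 2) 0 hlam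
  simp only [mul_zero] at h
  rw [h, Qphi, smul_eq_mul]
  simp only [mul_pow]
  rw [MeasureTheory.integral_const_mul]
  ring

lemma integral_deriv_sq_scaled (A : ℝ) {lam : ℝ} (hlam : 0 < lam) :
    ∫ x in Ioi (0 : ℝ), (A * lam * phi' (lam * x)) ^ 2 = A ^ 2 * lam * Kphi := by
  have h := integral_comp_mul_left_Ioi (fun y => (A * lam * phi' y) ^ 2) 0 hlam
  simp only [mul_zero] at h
  rw [h, Kphi, smul_eq_mul]
  simp only [mul_pow]
  rw [MeasureTheory.integral_const_mul]
  field_simp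

lemma integral_rpow_scaled {p : ℝ} (A : ℝ) {lam : ℝ} (hA : 0 ≤ A) (hlam : 0 < lam) :
    ∫ x in Ioi (0 : ℝ), |A * phi (lam * x)| ^ p = A ^ p * lam⁻¹ * Pphi p := by
  have h := integral_comp_mul_left_Ioi (fun y => |A * phi y| ^ p) 0 hlam
  simp only [mul_zero] at h
  rw [h, Pphi, smul_eq_mul]
  have : ∀ y : ℝ, |A * phi y| ^ p = A ^ p * |phi y| ^ p := fun y => by
    rw [abs_mul, Real.mul_rpow (abs_nonneg _) (abs_nonneg _), abs_of_nonneg hA]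
  simp only [this]
  rw [MeasureTheory.integral_const_mul]
  ring


lemma min_sq_le {f : ℝ → ℝ} {a b Q : ℝ} {s : Set ℝ} (hab : a < b)
    (hc : ContinuousOn f (Icc a b)) (hsub : Ioo a b ⊆ s)
    (hint : IntegrableOn (fun x => f x ^ 2) s)
    (hQ : (∫ x in s, f x ^ 2) ≤ Q) :
    ∃ y ∈ Icc a b, f y ^ 2 * (b - a) ≤ Q := by
  obtain ⟨y, hy, hmin⟩ := isCompact_Icc.exists_isMinOn (nonempty_Icc.mpr hab.le)
    ((hc.pow 2) : ContinuousOn (fun x => f x ^ 2) (Icc a b))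
  refine ⟨y, hy, ?_⟩
  have h1 : ∫ x in Ioo a b, f y ^ 2 ≤ ∫ x in Ioo a b, f x ^ 2 := by
    refine setIntegral_mono_on ?_ (hint.mono_set hsub) measurableSet_Ioo
      (fun x hx => isMinOn_iff.mp hmin x (Ioo_subset_Icc_self hx))
    exact integrableOn_const (by simp [Real.volume_Ioo])
  have h2 : ∫ x in Ioo a b, f x ^ 2 ≤ ∫ x in s, f x ^ 2 :=
    setIntegral_mono_set hint (Eventually.of_forall fun x => sq_nonneg _) hsub.eventuallyLE
  have h3 : ∫ x in Ioo a b, (f y ^ 2 : ℝ) = f y ^ 2 * (b - a) := by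
    simp [Real.volume_Ioo, ENNReal.toReal_ofReal (by linarith : (0:ℝ) ≤ b - a)]
    rw [max_eq_left (by linarith : (0:ℝ) ≤ b - a)]
    ring
  linarith

lemma abs_intervalIntegral_le {g' : ℝ → ℝ} {x y K L : ℝ} (hxy : x ≤ y) (hyL : y - x ≤ L)
    (hK : 0 < K) (hL : 0 < L) (hii : IntervalIntegrable g' volume x y)
    (hsq : IntegrableOn (fun t => g' t ^ 2) (Ioo x y))
    (hsqK : (∫ t in Ioo x y, g' t ^ 2) ≤ K) :
    |∫ t in x..y, g' t| ≤ Real.sqrt (L * K) := by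
  set c := Real.sqrt (K / L) with hc
  have hc0 : 0 < c := Real.sqrt_pos.mpr (div_pos hK hL)
  have hint : IntegrableOn g' (Ioo x y) :=
    ((intervalIntegrable_iff_integrableOn_Ioc_of_le hxy).mp hii).mono_set Ioo_subset_Ioc_self
  have h1 : |∫ t in x..y, g' t| ≤ ∫ t in Ioo x y, |g' t| := by
    rw [intervalIntegral.integral_of_le hxy, ← integral_Ioc_eq_integral_Ioo]
    have := norm_integral_le_integral_norm (μ := volume.restrict (Ioc x y)) g'
    simpa [Real.norm_eq_abs, integral_Ioc_eq_integral_Ioo] using this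
  have h2 : ∀ t : ℝ, |g' t| ≤ c / 2 + g' t ^ 2 / (2 * c) := by
    intro t
    have hs := sq_nonneg (|g' t| - c)
    have ha : g' t ^ 2 = |g' t| ^ 2 := (sq_abs _).symm
    rw [div_add_div _ _ (by norm_num) (by positivity), le_div_iff₀ (by positivity)]
    nlinarith
  have h3 : ∫ t in Ioo x y, |g' t| ≤ ∫ t in Ioo x y, (c / 2 + g' t ^ 2 / (2 * c)) := by
    refine integral_mono hint.abs ?_ h2
    exact (integrableOn_const (by simp [Real.volume_Ioo])).add
      (hsq.div_const _)
  have h4 : ∫ t in Ioo x y, (c / 2 + g' t ^ 2 / (2 * c)) =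
      c / 2 * (y - x) + (∫ t in Ioo x y, g' t ^ 2) / (2 * c) := by
    rw [integral_add (integrableOn_const (s := Ioo x y) (μ := volume) (C := c / 2) (by simp [Real.volume_Ioo]))
      (hsq.div_const _)]
    congr 1
    · simp [Real.volume_Ioo, ENNReal.toReal_ofReal (by linarith : (0:ℝ) ≤ y - x)]
      rw [max_eq_left (by linarith : (0:ℝ) ≤ y - x)]
      ring
    · simp only [div_eq_mul_inv]
      rw [MeasureTheory.integral_mul_const]
  have hc2 : c ^ 2 = K / L := Real.sq_sqrt (div_pos hK hL).le
  have hKc : K = c ^ 2 * L := by rw [hc2]; field_simp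
  have e1 : c * L = Real.sqrt (L * K) := by
    rw [show L * K = (c * L) ^ 2 by rw [hKc]; ring]
    exact (Real.sqrt_sq (by positivity)).symm
  have hbound : c / 2 * (y - x) + (∫ t in Ioo x y, g' t ^ 2) / (2 * c) ≤
      c / 2 * L + K / (2 * c) := by
    have b1 : c / 2 * (y - x) ≤ c / 2 * L := by nlinarith
    have b2 : (∫ t in Ioo x y, g' t ^ 2) / (2 * c) ≤ K / (2 * c) := by gcongr
    linarith
  have final : c / 2 * L + K / (2 * c) = Real.sqrt (L * K) := by
    rw [← e1, hKc]; field_simp; ring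
  linarith


lemma sq_add_bound {u a b : ℝ} (ha : 0 ≤ a) (hb : 0 ≤ b)
    (h : |u| ≤ Real.sqrt a + Real.sqrt b) : u ^ 2 ≤ 2 * a + 2 * b := by
  have h1 : Real.sqrt a ^ 2 = a := Real.sq_sqrt ha
  have h2 : Real.sqrt b ^ 2 = b := Real.sq_sqrt hb
  have h3 : u ^ 2 = |u| ^ 2 := (sq_abs u).symm
  nlinarith [abs_nonneg u, Real.sqrt_nonneg a, Real.sqrt_nonneg b,
    sq_nonneg (Real.sqrt a - Real.sqrt b)]

lemma pt_bound_halfline {p : ℝ} {f f' : ℝ → ℝ} (hf : H1HalfLine p f f') {Q K L : ℝ}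
    (hQ : (∫ x in Ioi (0:ℝ), f x ^ 2) ≤ Q) (hK : (∫ x in Ioi (0:ℝ), f' x ^ 2) ≤ K)
    (hK0 : 0 < K) (hL : 0 < L) {x₀ : ℝ} (hx₀ : 0 ≤ x₀) :
    f x₀ ^ 2 ≤ 2 * (Q / L) + 2 * (L * K) := by
  obtain ⟨hcont, hii, hFTC, hf2, hfp, hf'2⟩ := hf
  have hQ0 : (0:ℝ) ≤ Q := le_trans (integral_nonneg fun x => sq_nonneg _) hQ
  obtain ⟨y, hy, hmin⟩ := min_sq_le (a := x₀) (b := x₀ + L) (by linarith)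
      (hcont.mono (fun t ht => le_trans hx₀ ht.1))
      (fun t ht => lt_of_le_of_lt hx₀ ht.1) hf2 hQ
  have hyQ : f y ^ 2 ≤ Q / L := by
    rw [le_div_iff₀ hL]
    simpa using hmin
  have hy0 : 0 ≤ y := le_trans hx₀ hy.1
  have hsub : Ioo x₀ y ⊆ Ioi (0:ℝ) := fun t ht => lt_of_le_of_lt hx₀ ht.1
  have hIi : |∫ t in x₀..y, f' t| ≤ Real.sqrt (L * K) :=
    abs_intervalIntegral_le hy.1 (by linarith [hy.2]) hK0 hL (hii x₀ y hx₀ hy0)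
      (hf'2.mono_set hsub)
      (le_trans (setIntegral_mono_set hf'2
        (Eventually.of_forall fun t => sq_nonneg _) hsub.eventuallyLE) hK)
  have hfy : |f y| ≤ Real.sqrt (Q / L) := by
    rw [← Real.sqrt_sq_eq_abs]
    exact Real.sqrt_le_sqrt hyQ
  have hx₀eq : f x₀ = f y - ∫ t in x₀..y, f' t := by rw [hFTC x₀ y hx₀ hy0]; ring
  have habs : |f x₀| ≤ Real.sqrt (Q / L) + Real.sqrt (L * K) := by
    rw [hx₀eq]
    exact le_trans (abs_sub _ _) (add_le_add hfy hIi)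
  exact sq_add_bound (by positivity) (by positivity) habs

lemma pt_bound_edge {p ℓ : ℝ} {g g' : ℝ → ℝ} (hℓ : 0 < ℓ) (hg : H1Edge p ℓ g g')
    {Q K L V : ℝ}
    (hQ : (∫ x in Ioo (0:ℝ) ℓ, g x ^ 2) ≤ Q) (hK : (∫ x in Ioo (0:ℝ) ℓ, g' x ^ 2) ≤ K)
    (hK0 : 0 < K) (hL : 0 < L) (hV : g 0 ^ 2 ≤ V) {x₀ : ℝ} (hx₀ : x₀ ∈ Icc 0 ℓ) :
    g x₀ ^ 2 ≤ 2 * V + (2 * (Q / L) + 2 * (L * K)) := by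
  obtain ⟨hcont, hii, hFTC, hg2, hgp, hg'2⟩ := hg
  have hQ0 : (0:ℝ) ≤ Q := le_trans (integral_nonneg fun x => sq_nonneg _) hQ
  have hV0 : (0:ℝ) ≤ V := le_trans (sq_nonneg _) hV
  have h0mem : (0:ℝ) ∈ Icc (0:ℝ) ℓ := ⟨le_refl _, hℓ.le⟩
  rcases le_or_gt ℓ L with hcase | hcase
  · -- short edge : connect to the vertex
    have hintsub : Ioo (0:ℝ) x₀ ⊆ Ioo (0:ℝ) ℓ := Ioo_subset_Ioo (le_refl _) hx₀.2
    have hIi : |∫ t in (0:ℝ)..x₀, g' t| ≤ Real.sqrt (L * K) :=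
      abs_intervalIntegral_le hx₀.1 (by linarith [hx₀.2]) hK0 hL (hii 0 h0mem x₀ hx₀)
        (hg'2.mono_set hintsub)
        (le_trans (setIntegral_mono_set hg'2
          (Eventually.of_forall fun t => sq_nonneg _) hintsub.eventuallyLE) hK)
    have hx₀eq : g x₀ = g 0 + ∫ t in (0:ℝ)..x₀, g' t := hFTC 0 h0mem x₀ hx₀
    have habs : |g x₀| ≤ Real.sqrt V + Real.sqrt (L * K) := by
      rw [hx₀eq]
      refine le_trans (abs_add_le _ _) (add_le_add ?_ hIi)
      rw [← Real.sqrt_sq_eq_abs]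
      exact Real.sqrt_le_sqrt hV
    have := sq_add_bound hV0 (by positivity) habs
    have hQL : 0 ≤ Q / L := by positivity
    linarith
  · -- long edge : use the minimum on a window of length L
    set a := min x₀ (ℓ - L) with ha
    have ha0 : 0 ≤ a := le_min hx₀.1 (by linarith)
    have haL : a + L ≤ ℓ := by
      have : a ≤ ℓ - L := min_le_right _ _
      linarith
    have hx₀ab : x₀ ∈ Icc a (a + L) := by
      constructor
      · exact min_le_left _ _
      · rcases le_total x₀ (ℓ - L) with h | h
        · have : a = x₀ := min_eq_left h
          linarith
        · have : a = ℓ - L := min_eq_right h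
          linarith [hx₀.2]
    have hsubI : Icc a (a + L) ⊆ Icc (0:ℝ) ℓ := fun t ht => ⟨le_trans ha0 ht.1, le_trans ht.2 haL⟩
    obtain ⟨y, hy, hmin⟩ := min_sq_le (a := a) (b := a + L) (by linarith)
        (hcont.mono hsubI)
        (fun t ht => (mem_Ioo.mpr ⟨lt_of_le_of_lt ha0 ht.1, lt_of_lt_of_le ht.2 haL⟩)) hg2 hQ
    have hyQ : g y ^ 2 ≤ Q / L := by
      rw [le_div_iff₀ hL]
      simpa using hmin
    have hymem : y ∈ Icc (0:ℝ) ℓ := hsubI hy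
    -- connect x₀ to y
    rcases le_total x₀ y with hxy | hxy
    · have hsub2 : Ioo x₀ y ⊆ Ioo (0:ℝ) ℓ := fun t ht =>
        ⟨lt_of_le_of_lt hx₀.1 ht.1, lt_of_lt_of_le ht.2 hymem.2⟩
      have hIi : |∫ t in x₀..y, g' t| ≤ Real.sqrt (L * K) :=
        abs_intervalIntegral_le hxy (by linarith [hy.2, hx₀ab.1]) hK0 hL (hii x₀ hx₀ y hymem)
          (hg'2.mono_set hsub2)
          (le_trans (setIntegral_mono_set hg'2
            (Eventually.of_forall fun t => sq_nonneg _) hsub2.eventuallyLE) hK)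
      have hx₀eq : g x₀ = g y - ∫ t in x₀..y, g' t := by rw [hFTC x₀ hx₀ y hymem]; ring
      have habs : |g x₀| ≤ Real.sqrt (Q / L) + Real.sqrt (L * K) := by
        rw [hx₀eq]
        refine le_trans (abs_sub _ _) (add_le_add ?_ hIi)
        rw [← Real.sqrt_sq_eq_abs]
        exact Real.sqrt_le_sqrt hyQ
      have := sq_add_bound (by positivity) (by positivity) habs
      linarith
    · have hsub2 : Ioo y x₀ ⊆ Ioo (0:ℝ) ℓ := fun t ht =>
        ⟨lt_of_le_of_lt hymem.1 ht.1, lt_of_lt_of_le ht.2 hx₀.2⟩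
      have hIi : |∫ t in y..x₀, g' t| ≤ Real.sqrt (L * K) :=
        abs_intervalIntegral_le hxy (by linarith [hx₀ab.2, hy.1]) hK0 hL (hii y hymem x₀ hx₀)
          (hg'2.mono_set hsub2)
          (le_trans (setIntegral_mono_set hg'2
            (Eventually.of_forall fun t => sq_nonneg _) hsub2.eventuallyLE) hK)
      have hx₀eq : g x₀ = g y + ∫ t in y..x₀, g' t := hFTC y hymem x₀ hx₀
      have habs : |g x₀| ≤ Real.sqrt (Q / L) + Real.sqrt (L * K) := by
        rw [hx₀eq]
        refine le_trans (abs_add_le _ _) (add_le_add ?_ hIi)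
        rw [← Real.sqrt_sq_eq_abs]
        exact Real.sqrt_le_sqrt hyQ
      have := sq_add_bound (by positivity) (by positivity) habs
      linarith


def SNset (G : StarGraph) (u : GraphFun G) : Set ℝ :=
  { y | ∃ i : Fin G.m, ∃ x ≥ (0:ℝ), y = |u.f i x| } ∪
  { y | ∃ j : Fin G.k, ∃ x ∈ Icc 0 (G.ℓ j), y = |u.g j x| }

lemma supNormG_eq (G : StarGraph) (u : GraphFun G) :
    supNormG G u = sSup (SNset G u) := rfl

section Graph

variable {p : ℝ} {G : StarGraph} {u : GraphFun G}

lemma mass_term_f (hu : InH1G p G u) (i : Fin G.m) :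
    (∫ x in Ioi (0:ℝ), (u.f i x) ^ 2) ≤ massG G u := by
  rw [massG]
  have h1 : (∫ x in Ioi (0:ℝ), (u.f i x) ^ 2) ≤
      ∑ i', ∫ x in Ioi (0:ℝ), (u.f i' x) ^ 2 :=
    Finset.single_le_sum (f := fun i' => ∫ x in Ioi (0:ℝ), (u.f i' x) ^ 2) (fun i' _ => integral_nonneg fun x => sq_nonneg _)
      (Finset.mem_univ i)
  have h2 : (0:ℝ) ≤ ∑ j, ∫ x in Ioo 0 (G.ℓ j), (u.g j x) ^ 2 :=
    Finset.sum_nonneg fun j _ => integral_nonneg fun x => sq_nonneg _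
  linarith

lemma mass_term_g (hu : InH1G p G u) (j : Fin G.k) :
    (∫ x in Ioo (0:ℝ) (G.ℓ j), (u.g j x) ^ 2) ≤ massG G u := by
  rw [massG]
  have h1 : (∫ x in Ioo (0:ℝ) (G.ℓ j), (u.g j x) ^ 2) ≤
      ∑ j', ∫ x in Ioo 0 (G.ℓ j'), (u.g j' x) ^ 2 :=
    Finset.single_le_sum (f := fun j' => ∫ x in Ioo (0:ℝ) (G.ℓ j'), (u.g j' x) ^ 2)
      (fun j' _ => integral_nonneg fun x => sq_nonneg _) (Finset.mem_univ j)
  have h2 : (0:ℝ) ≤ ∑ i, ∫ x in Ioi (0:ℝ), (u.f i x) ^ 2 :=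
    Finset.sum_nonneg fun i _ => integral_nonneg fun x => sq_nonneg _
  linarith

lemma kin_term_f (hu : InH1G p G u) (i : Fin G.m) :
    (∫ x in Ioi (0:ℝ), (u.f' i x) ^ 2) ≤ kinG G u := by
  rw [kinG]
  have h1 : (∫ x in Ioi (0:ℝ), (u.f' i x) ^ 2) ≤
      ∑ i', ∫ x in Ioi (0:ℝ), (u.f' i' x) ^ 2 :=
    Finset.single_le_sum (f := fun i' => ∫ x in Ioi (0:ℝ), (u.f' i' x) ^ 2) (fun i' _ => integral_nonneg fun x => sq_nonneg _)
      (Finset.mem_univ i)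
  have h2 : (0:ℝ) ≤ ∑ j, ∫ x in Ioo 0 (G.ℓ j), (u.g' j x) ^ 2 :=
    Finset.sum_nonneg fun j _ => integral_nonneg fun x => sq_nonneg _
  linarith

lemma kin_term_g (hu : InH1G p G u) (j : Fin G.k) :
    (∫ x in Ioo (0:ℝ) (G.ℓ j), (u.g' j x) ^ 2) ≤ kinG G u := by
  rw [kinG]
  have h1 : (∫ x in Ioo (0:ℝ) (G.ℓ j), (u.g' j x) ^ 2) ≤
      ∑ j', ∫ x in Ioo 0 (G.ℓ j'), (u.g' j' x) ^ 2 :=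
    Finset.single_le_sum (f := fun j' => ∫ x in Ioo (0:ℝ) (G.ℓ j'), (u.g' j' x) ^ 2)
      (fun j' _ => integral_nonneg fun x => sq_nonneg _) (Finset.mem_univ j)
  have h2 : (0:ℝ) ≤ ∑ i, ∫ x in Ioi (0:ℝ), (u.f' i x) ^ 2 :=
    Finset.sum_nonneg fun i _ => integral_nonneg fun x => sq_nonneg _
  linarith

lemma kinG_nonneg : 0 ≤ kinG G u :=
  add_nonneg (Finset.sum_nonneg fun i _ => integral_nonneg fun x => sq_nonneg _)
    (Finset.sum_nonneg fun j _ => integral_nonneg fun x => sq_nonneg _)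

lemma kin_pos (hm : 1 ≤ G.m) (hu : InH1G p G u) {μ : ℝ} (hμ : 0 < μ)
    (hmass : massG G u = μ) : 0 < kinG G u := by
  by_contra hK
  push_neg at hK
  obtain ⟨hu1, hu2, hu3, hu4, hu5⟩ := hu
  set i₀ : Fin G.m := ⟨0, hm⟩ with hi₀
  -- each derivative component is a.e. zero
  have hfconst : ∀ i : Fin G.m, ∀ x, 0 ≤ x → u.f i x = u.f i 0 := by
    intro i x hx
    have h0 : (∫ t in Ioi (0:ℝ), (u.f' i t) ^ 2) = 0 := by
      have h1 : (0:ℝ) ≤ ∫ t in Ioi (0:ℝ), (u.f' i t) ^ 2 :=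
        integral_nonneg fun x => sq_nonneg _
      have h2 := kin_term_f (p := p) ⟨hu1, hu2, hu3, hu4, hu5⟩ i
      linarith
    have hae : (fun t => (u.f' i t) ^ 2) =ᵐ[volume.restrict (Ioi 0)] 0 :=
      (integral_eq_zero_iff_of_nonneg (fun t => sq_nonneg _) (hu1 i).2.2.2.2.2).mp h0
    have hae' : u.f' i =ᵐ[volume.restrict (Ioi 0)] 0 := by
      filter_upwards [hae] with t ht
      exact (pow_eq_zero_iff two_ne_zero).mp ht
    have hzero : (∫ t in (0:ℝ)..x, u.f' i t) = 0 := by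
      rw [intervalIntegral.integral_of_le hx]
      have : u.f' i =ᵐ[volume.restrict (Ioc 0 x)] 0 :=
        ae_restrict_of_ae_restrict_of_subset Ioc_subset_Ioi_self hae'
      exact integral_eq_zero_of_ae this
    rw [(hu1 i).2.2.1 0 x le_rfl hx, hzero, add_zero]
  have hfzero : ∀ i : Fin G.m, u.f i 0 = 0 := by
    intro i
    have hconst : IntegrableOn (fun _ : ℝ => (u.f i 0) ^ 2) (Ioi 0) := by
      refine ((hu1 i).2.2.2.1).congr_fun (fun x hx => ?_) measurableSet_Ioi
      dsimp only
      rw [hfconst i x (le_of_lt hx)]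
    rcases (integrableOn_const_iff (C := u.f i 0 ^ 2)).mp hconst with h | h
    · exact (pow_eq_zero_iff two_ne_zero).mp (by simpa using h)
    · simp [Real.volume_Ioi] at h
  have hgzero : ∀ j : Fin G.k, ∀ x ∈ Icc (0:ℝ) (G.ℓ j), u.g j x = 0 := by
    intro j x hx
    have h0 : (∫ t in Ioo (0:ℝ) (G.ℓ j), (u.g' j t) ^ 2) = 0 := by
      have h1 : (0:ℝ) ≤ ∫ t in Ioo (0:ℝ) (G.ℓ j), (u.g' j t) ^ 2 :=
        integral_nonneg fun x => sq_nonneg _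
      have h2 := kin_term_g (p := p) ⟨hu1, hu2, hu3, hu4, hu5⟩ j
      linarith
    have hae : (fun t => (u.g' j t) ^ 2) =ᵐ[volume.restrict (Ioo 0 (G.ℓ j))] 0 :=
      (integral_eq_zero_iff_of_nonneg (fun t => sq_nonneg _) (hu2 j).2.2.2.2.2).mp h0
    have hae' : u.g' j =ᵐ[volume.restrict (Ioo 0 (G.ℓ j))] 0 := by
      filter_upwards [hae] with t ht
      exact (pow_eq_zero_iff two_ne_zero).mp ht
    have h0mem : (0:ℝ) ∈ Icc (0:ℝ) (G.ℓ j) := ⟨le_refl _, le_trans hx.1 hx.2⟩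
    have hzero : (∫ t in (0:ℝ)..x, u.g' j t) = 0 := by
      rw [intervalIntegral.integral_of_le hx.1, integral_Ioc_eq_integral_Ioo]
      have : u.g' j =ᵐ[volume.restrict (Ioo 0 x)] 0 :=
        ae_restrict_of_ae_restrict_of_subset (Ioo_subset_Ioo le_rfl hx.2) hae'
      exact integral_eq_zero_of_ae this
    have := (hu2 j).2.2.1 0 h0mem x hx
    rw [this, hzero, add_zero, ← hu4 i₀ j, hfzero i₀]
  -- mass is zero
  have hmass0 : massG G u = 0 := by
    rw [massG]
    have h1 : ∀ i : Fin G.m, (∫ x in Ioi (0:ℝ), (u.f i x) ^ 2) = 0 := by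
      intro i
      rw [setIntegral_congr_fun measurableSet_Ioi
        (fun x hx => by
          show (u.f i x) ^ 2 = (0:ℝ)
          rw [hfconst i x (le_of_lt hx), hfzero i]; norm_num :
          EqOn (fun x => (u.f i x) ^ 2) (fun _ => (0:ℝ)) (Ioi 0))]
      simp
    have h2 : ∀ j : Fin G.k, (∫ x in Ioo (0:ℝ) (G.ℓ j), (u.g j x) ^ 2) = 0 := by
      intro j
      rw [setIntegral_congr_fun measurableSet_Ioo
        (fun x hx => by
          show (u.g j x) ^ 2 = (0:ℝ)
          rw [hgzero j x ⟨le_of_lt hx.1, le_of_lt hx.2⟩]; norm_num :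
          EqOn (fun x => (u.g j x) ^ 2) (fun _ => (0:ℝ)) (Ioo 0 (G.ℓ j)))]
      simp
    simp [h1, h2]
  rw [hmass0] at hmass
  linarith

lemma GN_sup (hm : 1 ≤ G.m) (hu : InH1G p G u) {μ : ℝ} (hμ : 0 < μ)
    (hmass : massG G u = μ) :
    0 ≤ supNormG G u ∧ BddAbove (SNset G u) ∧
      supNormG G u ^ 2 ≤ 12 * Real.sqrt (μ * kinG G u) := by
  have hK := kin_pos hm hu hμ hmass
  set K := kinG G u with hKdef
  set i₀ : Fin G.m := ⟨0, hm⟩ with hi₀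
  set L : ℝ := Real.sqrt (μ / K) with hL
  have hL0 : 0 < L := Real.sqrt_pos.mpr (div_pos hμ hK)
  have hLK : L * K = Real.sqrt (μ * K) := by
    have hL2 : L ^ 2 = μ / K := Real.sq_sqrt (div_pos hμ hK).le
    rw [show μ * K = (L * K) ^ 2 by rw [mul_pow, hL2]; field_simp]
    exact (Real.sqrt_sq (by positivity)).symm
  have hML : μ / L = L * K := by
    have hL2 : L ^ 2 = μ / K := Real.sq_sqrt (div_pos hμ hK).le
    have : μ = L ^ 2 * K := by rw [hL2]; field_simp
    rw [this]; field_simp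
  have hhalf : ∀ i : Fin G.m, ∀ x : ℝ, 0 ≤ x →
      (u.f i x) ^ 2 ≤ 4 * Real.sqrt (μ * K) := by
    intro i x hx
    have := pt_bound_halfline (hu.1 i)
      (le_of_le_of_eq (mass_term_f hu i) hmass) (kin_term_f hu i) hK hL0 hx
    rw [hML, hLK] at this
    linarith
  have hedge : ∀ j : Fin G.k, ∀ x ∈ Icc (0:ℝ) (G.ℓ j),
      (u.g j x) ^ 2 ≤ 12 * Real.sqrt (μ * K) := by
    intro j x hx
    have hV : (u.g j 0) ^ 2 ≤ 4 * Real.sqrt (μ * K) := by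
      rw [← hu.2.2.2.1 i₀ j]
      exact hhalf i₀ 0 le_rfl
    have := pt_bound_edge (G.ℓ_pos j) (hu.2.1 j)
      (le_of_le_of_eq (mass_term_g hu j) hmass) (kin_term_g hu j) hK hL0 hV hx
    rw [hML, hLK] at this
    linarith
  set B : ℝ := Real.sqrt (12 * Real.sqrt (μ * K)) with hB
  have hsqK : 0 ≤ 12 * Real.sqrt (μ * K) := by positivity
  have hmemB : ∀ y ∈ SNset G u, y ≤ B := by
    rintro y (⟨i, x, hx, rfl⟩ | ⟨j, x, hx, rfl⟩)
    · rw [← Real.sqrt_sq_eq_abs]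
      refine Real.sqrt_le_sqrt ?_
      have := hhalf i x hx
      have h4 : (0:ℝ) ≤ Real.sqrt (μ * K) := Real.sqrt_nonneg _
      linarith
    · rw [← Real.sqrt_sq_eq_abs]
      exact Real.sqrt_le_sqrt (hedge j x hx)
  have hBdd : BddAbove (SNset G u) := ⟨B, hmemB⟩
  have hne : |u.f i₀ 0| ∈ SNset G u := Or.inl ⟨i₀, 0, le_rfl, rfl⟩
  have hM0 : 0 ≤ supNormG G u :=
    le_trans (abs_nonneg _) (le_csSup hBdd hne)
  have hMB : supNormG G u ≤ B := csSup_le ⟨_, hne⟩ hmemB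
  refine ⟨hM0, hBdd, ?_⟩
  calc supNormG G u ^ 2 ≤ B ^ 2 := by nlinarith
    _ = 12 * Real.sqrt (μ * K) := Real.sq_sqrt hsqK

lemma rpow_pt {t M p : ℝ} (hp2 : 2 ≤ p) (ht : |t| ≤ M) :
    |t| ^ p ≤ M ^ (p - 2) * t ^ 2 := by
  have h0 : 0 ≤ |t| := abs_nonneg t
  rcases eq_or_lt_of_le h0 with h | h
  · rw [← h, Real.zero_rpow (by linarith), ← sq_abs, ← h]
    simp
  · have hM0 : (0:ℝ) < M := lt_of_lt_of_le h ht
    have he : |t| ^ p = |t| ^ (p - 2) * |t| ^ (2:ℝ) := by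
      rw [← Real.rpow_add h]; ring_nf
    rw [he, Real.rpow_two, sq_abs]
    exact mul_le_mul_of_nonneg_right
      (Real.rpow_le_rpow h0 ht (by linarith)) (sq_nonneg t)

lemma GN_lp (hp2 : 2 ≤ p) (hu : InH1G p G u) (hBdd : BddAbove (SNset G u)) :
    lpG p G u ≤ supNormG G u ^ (p - 2) * massG G u := by
  set M := supNormG G u with hM
  have hf : ∀ i : Fin G.m, (∫ x in Ioi (0:ℝ), |u.f i x| ^ p) ≤
      M ^ (p - 2) * ∫ x in Ioi (0:ℝ), (u.f i x) ^ 2 := by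
    intro i
    rw [← MeasureTheory.integral_const_mul]
    refine setIntegral_mono_on ((hu.1 i).2.2.2.2.1) (((hu.1 i).2.2.2.1).const_mul _)
      measurableSet_Ioi (fun x hx => ?_)
    exact rpow_pt hp2 (le_csSup hBdd (Or.inl ⟨i, x, le_of_lt hx, rfl⟩))
  have hg : ∀ j : Fin G.k, (∫ x in Ioo (0:ℝ) (G.ℓ j), |u.g j x| ^ p) ≤
      M ^ (p - 2) * ∫ x in Ioo (0:ℝ) (G.ℓ j), (u.g j x) ^ 2 := by
    intro j
    rw [← MeasureTheory.integral_const_mul]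
    refine setIntegral_mono_on ((hu.2.1 j).2.2.2.2.1) (((hu.2.1 j).2.2.2.1).const_mul _)
      measurableSet_Ioo (fun x hx => ?_)
    exact rpow_pt hp2
      (le_csSup hBdd (Or.inr ⟨j, x, ⟨le_of_lt hx.1, le_of_lt hx.2⟩, rfl⟩))
  rw [lpG, massG, mul_add, Finset.mul_sum, Finset.mul_sum]
  exact add_le_add (Finset.sum_le_sum fun i _ => hf i)
    (Finset.sum_le_sum fun j _ => hg j)

end Graph


lemma rpow_le_affine {t lam q : ℝ} (ht : 0 ≤ t) (hlam : 0 < lam) (hq0 : 0 < q)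
    (hq1 : q ≤ 1) : t ^ q ≤ lam ^ q + lam ^ (q - 1) * t := by
  rcases le_total t lam with h | h
  · have h1 : t ^ q ≤ lam ^ q := Real.rpow_le_rpow ht h hq0.le
    have h2 : 0 ≤ lam ^ (q - 1) * t := mul_nonneg (Real.rpow_nonneg hlam.le _) ht
    linarith
  · have ht0 : 0 < t := lt_of_lt_of_le hlam h
    have e : t ^ q = t ^ (q - 1) * t := by
      rw [Real.rpow_sub_one ht0.ne']; field_simp
    have h2 : t ^ (q - 1) ≤ lam ^ (q - 1) :=
      Real.rpow_le_rpow_of_nonpos hlam h (by linarith)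
    have h3 : 0 ≤ lam ^ q := Real.rpow_nonneg hlam.le _
    calc t ^ q = t ^ (q - 1) * t := e
      _ ≤ lam ^ (q - 1) * t := mul_le_mul_of_nonneg_right h2 ht
      _ ≤ lam ^ q + lam ^ (q - 1) * t := by linarith

lemma M_rpow_bound {M μ K p : ℝ} (hM : 0 ≤ M) (hμ : 0 ≤ μ) (hK : 0 ≤ K) (hp2 : 2 ≤ p)
    (hGN : M ^ 2 ≤ 12 * Real.sqrt (μ * K)) :
    M ^ (p - 2) ≤ 12 ^ ((p - 2) / 2) * (μ ^ ((p - 2) / 4) * K ^ ((p - 2) / 4)) := by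
  have hq : (0:ℝ) ≤ (p - 2) / 2 := by linarith
  have h1 : (M ^ 2 : ℝ) ^ ((p - 2) / 2) = M ^ (p - 2) := by
    rw [← Real.rpow_two, ← Real.rpow_mul hM]
    congr 1
    ring
  have hS : (0:ℝ) ≤ 12 * Real.sqrt (μ * K) := by positivity
  have h2 : (M ^ 2 : ℝ) ^ ((p - 2) / 2) ≤ (12 * Real.sqrt (μ * K)) ^ ((p - 2) / 2) :=
    Real.rpow_le_rpow (sq_nonneg M) hGN hq
  have h3 : (12 * Real.sqrt (μ * K)) ^ ((p - 2) / 2) =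
      12 ^ ((p - 2) / 2) * (μ ^ ((p - 2) / 4) * K ^ ((p - 2) / 4)) := by
    rw [Real.mul_rpow (by norm_num) (Real.sqrt_nonneg _)]
    congr 1
    rw [Real.sqrt_eq_rpow, ← Real.rpow_mul (mul_nonneg hμ hK),
      show 1 / 2 * ((p - 2) / 2) = (p - 2) / 4 by ring,
      Real.mul_rpow hμ hK]
  rw [← h1, ← h3]
  exact h2

lemma lp_le_of_GN {p : ℝ} {G : StarGraph} {u : GraphFun G} (hp2 : 2 ≤ p)
    (hu : InH1G p G u) (hBdd : BddAbove (SNset G u)) (hM0 : 0 ≤ supNormG G u)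
    {μ : ℝ} (hμ : 0 < μ) (hmass : massG G u = μ)
    (hGN : supNormG G u ^ 2 ≤ 12 * Real.sqrt (μ * kinG G u)) :
    lpG p G u ≤ 12 ^ ((p - 2) / 2) * μ ^ ((p - 2) / 4 + 1) * kinG G u ^ ((p - 2) / 4) := by
  have hK0 : 0 ≤ kinG G u := kinG_nonneg
  have h1 := GN_lp hp2 hu hBdd
  have h2 := M_rpow_bound hM0 hμ.le hK0 hp2 hGN
  have h3 : lpG p G u ≤
      (12 ^ ((p - 2) / 2) * (μ ^ ((p - 2) / 4) * kinG G u ^ ((p - 2) / 4))) * μ := by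
    rw [hmass] at h1
    refine le_trans h1 (mul_le_mul_of_nonneg_right h2 hμ.le)
  calc lpG p G u ≤ _ := h3
    _ = 12 ^ ((p - 2) / 2) * μ ^ ((p - 2) / 4 + 1) * kinG G u ^ ((p - 2) / 4) := by
        rw [Real.rpow_add_one hμ.ne']
        ring

lemma energyG_bddBelow {p : ℝ} (hp1 : 2 < p) (hp2 : p < 6) (G : StarGraph)
    (hm : 1 ≤ G.m) {μ : ℝ} (hμ : 0 < μ) :
    BddBelow { e | ∃ u : GraphFun G, InH1G p G u ∧ massG G u = μ ∧ e = energyG p G u } := by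
  set q : ℝ := (p - 2) / 4 with hqdef
  have hq0 : 0 < q := by rw [hqdef]; linarith
  have hq1 : q < 1 := by rw [hqdef]; linarith
  set c0 : ℝ := 12 ^ ((p - 2) / 2) * μ ^ (q + 1) / p with hc0def
  have hc00 : 0 < c0 := by
    have : (0:ℝ) < 12 ^ ((p - 2) / 2) := Real.rpow_pos_of_pos (by norm_num) _
    have : (0:ℝ) < μ ^ (q + 1) := Real.rpow_pos_of_pos hμ _
    positivity
  set lam : ℝ := max 1 ((2 * c0) ^ (1 - q)⁻¹) with hlamdef
  have hlam0 : (0:ℝ) < lam := lt_of_lt_of_le one_pos (le_max_left _ _)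
  have hlamq : c0 * lam ^ (q - 1) ≤ 1 / 2 := by
    have h1 : (2 * c0) ≤ lam ^ (1 - q) := by
      have h2 : ((2 * c0) ^ (1 - q)⁻¹) ^ (1 - q) = 2 * c0 :=
        Real.rpow_inv_rpow (by positivity) (by intro h; rw [sub_eq_zero] at h; linarith [h.symm])
      calc (2 * c0) = ((2 * c0) ^ (1 - q)⁻¹) ^ (1 - q) := h2.symm
        _ ≤ lam ^ (1 - q) :=
            Real.rpow_le_rpow (Real.rpow_nonneg (by positivity) _)
              (le_max_right _ _) (by linarith)
    have h3 : lam ^ (q - 1) * lam ^ (1 - q) = 1 := by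
      rw [← Real.rpow_add hlam0]; norm_num
    have h4 : 0 < lam ^ (1 - q) := Real.rpow_pos_of_pos hlam0 _
    have h5 : 0 < lam ^ (q - 1) := Real.rpow_pos_of_pos hlam0 _
    nlinarith [mul_le_mul_of_nonneg_right h1 h5.le]
  refine ⟨-(c0 * lam ^ q), fun e he => ?_⟩
  obtain ⟨u, hu, hmass, rfl⟩ := he
  obtain ⟨hM0, hBdd, hGN⟩ := GN_sup hm hu hμ hmass
  have hK0 : 0 ≤ kinG G u := kinG_nonneg
  have hlp := lp_le_of_GN (by linarith) hu hBdd hM0 hμ hmass hGN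
  have hp0 : (0:ℝ) < p := by linarith
  have hE : energyG p G u = (1/2) * kinG G u - (1/p) * lpG p G u := rfl
  have h6 : (1/p) * lpG p G u ≤ c0 * kinG G u ^ q := by
    have h7 : (1/p) * lpG p G u ≤
        (1/p) * (12 ^ ((p - 2) / 2) * μ ^ ((p - 2) / 4 + 1) * kinG G u ^ ((p - 2) / 4)) :=
      mul_le_mul_of_nonneg_left hlp (by positivity)
    calc (1/p) * lpG p G u ≤ _ := h7
      _ = c0 * kinG G u ^ q := by rw [hc0def, hqdef]; ring
  have h8 : kinG G u ^ q ≤ lam ^ q + lam ^ (q - 1) * kinG G u :=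
    rpow_le_affine hK0 hlam0 hq0 hq1.le
  have h9 : c0 * (lam ^ (q - 1) * kinG G u) ≤ (1/2) * kinG G u := by
    have := mul_le_mul_of_nonneg_right hlamq hK0
    calc c0 * (lam ^ (q - 1) * kinG G u) = c0 * lam ^ (q - 1) * kinG G u := by ring
      _ ≤ 1 / 2 * kinG G u := this
      _ = (1/2) * kinG G u := by ring
  rw [hE]
  have h10 : c0 * kinG G u ^ q ≤ c0 * lam ^ q + c0 * (lam ^ (q - 1) * kinG G u) := by
    have := mul_le_mul_of_nonneg_left h8 hc00.le
    linarith [this]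
  linarith


lemma levelG_le {p : ℝ} (hp1 : 2 < p) (hp2 : p < 6) :
    ∃ c : ℝ, 0 < c ∧ ∀ G : StarGraph, 1 ≤ G.m → ∀ μ : ℝ, 0 < μ →
      levelG p G μ ≤ -c * μ ^ ((p + 2) / (6 - p)) := by
  classical
  have hp0 : (0:ℝ) < p := by linarith
  have h6p : (0:ℝ) < 6 - p := by linarith
  have hQ := Qphi_pos
  have hP := Pphi_pos hp1.le
  have hK0 : (0:ℝ) ≤ Kphi := integral_nonneg fun x => sq_nonneg _
  set q2 : ℝ := p / 2 - 1 with hq2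
  have hq20 : 0 < q2 := by rw [hq2]; linarith
  have hq22 : q2 < 2 := by rw [hq2]; linarith
  set a : ℝ := Kphi / (2 * Qphi) with hadef
  set b : ℝ := Pphi p / (p * Qphi ^ (p/2)) with hbdef
  have hQp : (0:ℝ) < Qphi ^ (p/2) := Real.rpow_pos_of_pos hQ _
  have ha0 : 0 ≤ a := div_nonneg hK0 (by positivity)
  have hb0 : 0 < b := div_pos hP (by positivity)
  set r : ℝ := (b / (2 * (a + 1))) ^ (2 - q2)⁻¹ with hrdef
  have hr0 : 0 < r := Real.rpow_pos_of_pos (by positivity) _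
  set t : ℝ := min 1 r with htdef
  have ht0 : 0 < t := lt_min one_pos hr0
  have ht2 : a * t ^ (2 - q2) ≤ b / 2 := by
    have h1 : t ^ (2 - q2) ≤ b / (2 * (a + 1)) := by
      calc t ^ (2 - q2) ≤ r ^ (2 - q2) :=
            Real.rpow_le_rpow ht0.le (min_le_right _ _) (by linarith)
        _ = b / (2 * (a + 1)) :=
            Real.rpow_inv_rpow (by positivity) (by intro h; rw [sub_eq_zero] at h; linarith)
    have h2 : a * t ^ (2 - q2) ≤ a * (b / (2 * (a + 1))) :=
      mul_le_mul_of_nonneg_left h1 ha0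
    have h3 : a * (b / (2 * (a + 1))) ≤ b / 2 := by
      rw [← mul_div_assoc, div_le_div_iff₀ (by positivity) (by norm_num : (0:ℝ) < 2)]
      nlinarith
    linarith
  have htq2 : (0:ℝ) < t ^ q2 := Real.rpow_pos_of_pos ht0 _
  set c : ℝ := b / 2 * t ^ q2 with hcdef
  have hc0 : 0 < c := by positivity
  refine ⟨c, hc0, fun G hm μ hμ => ?_⟩
  set β : ℝ := (p - 2) / (6 - p) with hβdef
  set s : ℝ := (p + 2) / (6 - p) with hsdef
  have hμβ : (0:ℝ) < μ ^ β := Real.rpow_pos_of_pos hμ _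
  set lam : ℝ := t * μ ^ β with hlamdef
  have hlam0 : (0:ℝ) < lam := by positivity
  have hAarg : (0:ℝ) < μ * lam / Qphi := by positivity
  set A : ℝ := Real.sqrt (μ * lam / Qphi) with hAdef
  have hA0 : (0:ℝ) < A := Real.sqrt_pos.mpr hAarg
  have hA2 : A ^ 2 = μ * lam / Qphi := Real.sq_sqrt hAarg.le
  set i₀ : Fin G.m := ⟨0, hm⟩ with hi₀
  set v : GraphFun G := ⟨fun i x => if i = i₀ then A * phi (lam * x) else 0,
    fun i x => if i = i₀ then A * lam * phi' (lam * x) else 0,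
    fun _ _ => 0, fun _ _ => 0⟩ with hv
  have hvH1 : InH1G p G v := by
    refine ⟨fun i => ?_, fun j => H1Edge_zero (by linarith), ?_, ?_, ?_⟩
    · by_cases h : i = i₀
      · have e1 : v.f i = fun x => A * phi (lam * x) := by funext x; simp [hv, h]
        have e2 : v.f' i = fun x => A * lam * phi' (lam * x) := by funext x; simp [hv, h]
        rw [e1, e2]
        exact H1HalfLine_test hp1.le hA0 hlam0
      · have e1 : v.f i = fun _ => 0 := by funext x; simp [hv, h]
        have e2 : v.f' i = fun _ => 0 := by funext x; simp [hv, h]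
        rw [e1, e2]
        exact H1HalfLine_zero (by linarith)
    · intro i i'; by_cases h : i = i₀ <;> by_cases h' : i' = i₀ <;> simp [hv, h, h', phi]
    · intro i j; by_cases h : i = i₀ <;> simp [hv, h, phi]
    · intro j j'; simp [hv]
  have hfi₀sq : (∫ x in Ioi (0:ℝ), (v.f i₀ x) ^ 2) = A ^ 2 * lam⁻¹ * Qphi := by
    have e1 : (fun x => (v.f i₀ x) ^ 2) = fun x => (A * phi (lam * x)) ^ 2 := by
      funext x; simp [hv]
    rw [show (∫ x in Ioi (0:ℝ), (v.f i₀ x) ^ 2) =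
        ∫ x in Ioi (0:ℝ), (A * phi (lam * x)) ^ 2 by rw [e1]]
    exact integral_sq_scaled A hlam0
  have hmassv : massG G v = μ := by
    rw [massG]
    rw [Finset.sum_eq_single i₀ (fun i _ h => by simp [hv, h])
      (fun h => absurd (Finset.mem_univ _) h)]
    have hg0 : ∀ j : Fin G.k, (∫ x in Ioo (0:ℝ) (G.ℓ j), (v.g j x) ^ 2) = 0 := by
      intro j; simp [hv]
    rw [Finset.sum_eq_zero (fun j _ => hg0 j), add_zero, hfi₀sq, hA2]
    field_simp
  have hkinv : kinG G v = A ^ 2 * lam * Kphi := by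
    rw [kinG]
    rw [Finset.sum_eq_single i₀ (fun i _ h => by simp [hv, h])
      (fun h => absurd (Finset.mem_univ _) h)]
    have hg0 : ∀ j : Fin G.k, (∫ x in Ioo (0:ℝ) (G.ℓ j), (v.g' j x) ^ 2) = 0 := by
      intro j; simp [hv]
    rw [Finset.sum_eq_zero (fun j _ => hg0 j), add_zero]
    have e1 : (fun x => (v.f' i₀ x) ^ 2) = fun x => (A * lam * phi' (lam * x)) ^ 2 := by
      funext x; simp [hv]
    rw [show (∫ x in Ioi (0:ℝ), (v.f' i₀ x) ^ 2) =
        ∫ x in Ioi (0:ℝ), (A * lam * phi' (lam * x)) ^ 2 by rw [e1]]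
    exact integral_deriv_sq_scaled A hlam0
  have hlpv : lpG p G v = A ^ p * lam⁻¹ * Pphi p := by
    rw [lpG]
    rw [Finset.sum_eq_single i₀
      (fun i _ h => by simp [hv, h, Real.zero_rpow (by linarith : p ≠ 0)])
      (fun h => absurd (Finset.mem_univ _) h)]
    have hg0 : ∀ j : Fin G.k, (∫ x in Ioo (0:ℝ) (G.ℓ j), |v.g j x| ^ p) = 0 := by
      intro j; simp [hv, Real.zero_rpow (by linarith : p ≠ 0)]
    rw [Finset.sum_eq_zero (fun j _ => hg0 j), add_zero]
    have e1 : (fun x => |v.f i₀ x| ^ p) = fun x => |A * phi (lam * x)| ^ p := by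
      funext x; simp [hv]
    rw [show (∫ x in Ioi (0:ℝ), |v.f i₀ x| ^ p) =
        ∫ x in Ioi (0:ℝ), |A * phi (lam * x)| ^ p by rw [e1]]
    exact integral_rpow_scaled A hA0.le hlam0
  -- the scaling identities
  have hμs : (0:ℝ) < μ ^ s := Real.rpow_pos_of_pos hμ _
  have hmu2 : μ * (μ ^ β) ^ 2 = μ ^ s := by
    rw [← Real.rpow_two, ← Real.rpow_mul hμ.le]
    nth_rewrite 1 [← Real.rpow_one μ]
    rw [← Real.rpow_add hμ]
    congr 1
    rw [hβdef, hsdef]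
    field_simp
    ring
  have hterm1 : (1/2) * (A ^ 2 * lam * Kphi) = a * (t ^ 2 * μ ^ s) := by
    have e1 : μ * lam ^ 2 = t ^ 2 * μ ^ s := by
      rw [hlamdef, mul_pow, ← hmu2]; ring
    calc (1/2) * (A ^ 2 * lam * Kphi) = Kphi / (2 * Qphi) * (μ * lam ^ 2) := by
          rw [hA2]; field_simp
      _ = a * (t ^ 2 * μ ^ s) := by rw [e1, hadef]
  have hAp : A ^ p = (μ * lam / Qphi) ^ (p / 2) := by
    rw [hAdef, Real.sqrt_eq_rpow, ← Real.rpow_mul hAarg.le]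
    congr 1
    ring
  have hterm2 : (1/p) * (A ^ p * lam⁻¹ * Pphi p) = b * (t ^ q2 * μ ^ s) := by
    have e1 : (μ * lam / Qphi) ^ (p/2) = μ ^ (p/2) * lam ^ (p/2) / Qphi ^ (p/2) := by
      rw [Real.div_rpow (by positivity) hQ.le, Real.mul_rpow hμ.le hlam0.le]
    have e2 : lam ^ (p/2) * lam⁻¹ = lam ^ q2 := by
      rw [hq2, Real.rpow_sub_one hlam0.ne']; ring
    have e3 : lam ^ q2 = t ^ q2 * (μ ^ β) ^ q2 := by
      rw [hlamdef, Real.mul_rpow ht0.le hμβ.le]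
    have e4 : μ ^ (p/2) * (μ ^ β) ^ q2 = μ ^ s := by
      rw [← Real.rpow_mul hμ.le, ← Real.rpow_add hμ]
      congr 1
      rw [hq2, hβdef, hsdef]
      field_simp
      ring
    calc (1/p) * (A ^ p * lam⁻¹ * Pphi p)
        = (1/p) * ((μ^(p/2) * (lam^(p/2) * lam⁻¹) / Qphi^(p/2)) * Pphi p) := by
          rw [hAp, e1]; ring
      _ = (1/p) * ((μ^(p/2) * (t^q2 * (μ^β)^q2) / Qphi^(p/2)) * Pphi p) := by
          rw [e2, e3]
      _ = b * (t ^ q2 * μ ^ s) := by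
          rw [hbdef, ← e4]
          field_simp
  have henergy : energyG p G v = a * (t^2 * μ^s) - b * (t^q2 * μ^s) := by
    unfold energyG
    rw [hkinv, hlpv, hterm1, hterm2]
  have hat : a * t ^ 2 ≤ b / 2 * t ^ q2 := by
    have h1 : t ^ (2 - q2) * t ^ q2 = t ^ 2 := by
      rw [← Real.rpow_add ht0, show 2 - q2 + q2 = (2:ℝ) by ring, Real.rpow_two]
    have h2 := mul_le_mul_of_nonneg_right ht2 htq2.le
    calc a * t ^ 2 = a * t ^ (2 - q2) * t ^ q2 := by rw [mul_assoc, h1]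
      _ ≤ b / 2 * t ^ q2 := h2
  have hfinal : energyG p G v ≤ -c * μ ^ s := by
    rw [henergy, hcdef]
    have h3 := mul_le_mul_of_nonneg_right hat hμs.le
    linarith [h3]
  exact le_trans (csInf_le (energyG_bddBelow hp1 hp2 G hm hμ) ⟨v, hvH1, hmassv, rfl⟩) hfinal

end UAPE
/-- Lemma 2.6, universal a priori estimates: there is `C_p > 0`,
depending only on `p ∈ (2,6)`, such that for every star graph `G` with at least one
half-line, every `μ > 0` and every `u ∈ H¹_μ(G)` with `E(u,G) ≤ ½ E_G(μ)`, the
quantities `‖u'‖²_{L²}`, `‖u‖^p_{L^p}` and `‖u‖²_{L^∞}` are bounded above and below by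
the corresponding powers of `μ`, with `β = (p−2)/(6−p)`. -/
theorem universal_a_priori_estimates (p : ℝ) (hp₁ : 2 < p) (hp₂ : p < 6) :
    ∃ C : ℝ, 0 < C ∧
      ∀ G : StarGraph, 1 ≤ G.m → ∀ μ : ℝ, 0 < μ →
        ∀ u : GraphFun G, InH1G p G u → massG G u = μ →
          energyG p G u ≤ (1 / 2) * levelG p G μ →
          (C⁻¹ * μ ^ (2 * ((p - 2) / (6 - p)) + 1) ≤ kinG G u ∧
            kinG G u ≤ C * μ ^ (2 * ((p - 2) / (6 - p)) + 1)) ∧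
          (C⁻¹ * μ ^ (2 * ((p - 2) / (6 - p)) + 1) ≤ lpG p G u ∧
            lpG p G u ≤ C * μ ^ (2 * ((p - 2) / (6 - p)) + 1)) ∧
          (C⁻¹ * μ ^ ((p - 2) / (6 - p) + 1) ≤ supNormG G u ^ 2 ∧
            supNormG G u ^ 2 ≤ C * μ ^ ((p - 2) / (6 - p) + 1)) := by
  classical
  have hp0 : (0:ℝ) < p := by linarith
  have h6p : (0:ℝ) < 6 - p := by linarith
  have hp22 : (0:ℝ) < p - 2 := by linarith
  obtain ⟨c₀, hc₀, hlevel⟩ := UAPE.levelG_le hp₁ hp₂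
  set s : ℝ := (p + 2) / (6 - p) with hsdef
  set q : ℝ := (p - 2) / 4 with hqdef
  have hq0 : 0 < q := by rw [hqdef]; linarith
  have hq1 : q < 1 := by rw [hqdef]; linarith
  have h1q : (0:ℝ) < 1 - q := by linarith
  set cLp : ℝ := p * c₀ / 2 with hcLp
  have hcLp0 : 0 < cLp := by positivity
  set cM : ℝ := cLp ^ (2 / (p - 2)) with hcM
  have hcM0 : 0 < cM := Real.rpow_pos_of_pos hcLp0 _
  set cK : ℝ := (cM / 12) ^ 2 with hcK
  have hcK0 : 0 < cK := by positivity
  set c8 : ℝ := (12:ℝ) ^ ((p - 2) / 2) with hc8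
  have hc80 : 0 < c8 := Real.rpow_pos_of_pos (by norm_num) _
  set CK : ℝ := (2 * c8 / p) ^ (1 - q)⁻¹ with hCK
  have hCK0 : 0 < CK := Real.rpow_pos_of_pos (by positivity) _
  set CLp : ℝ := c8 * CK ^ q with hCLp
  have hCKq0 : 0 < CK ^ q := Real.rpow_pos_of_pos hCK0 _
  have hCLp0 : 0 < CLp := by positivity
  set CM : ℝ := 12 * Real.sqrt CK with hCM
  have hCM0 : 0 < CM := by positivity
  set C : ℝ := max (max (max CK CLp) CM) (max (max cK⁻¹ cLp⁻¹) cM⁻¹) with hC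
  have hC0 : 0 < C :=
    lt_of_lt_of_le hCK0 (le_trans (le_max_left CK CLp)
      (le_trans (le_max_left _ CM) (le_max_left _ _)))
  have hCge : CK ≤ C ∧ CLp ≤ C ∧ CM ≤ C := by
    refine ⟨?_, ?_, ?_⟩
    · exact le_trans (le_max_left CK CLp) (le_trans (le_max_left _ CM) (le_max_left _ _))
    · exact le_trans (le_max_right CK CLp) (le_trans (le_max_left _ CM) (le_max_left _ _))
    · exact le_trans (le_max_right _ CM) (le_max_left _ _)
  have hCinv : C⁻¹ ≤ cK ∧ C⁻¹ ≤ cLp ∧ C⁻¹ ≤ cM := by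
    have hinv : ∀ c : ℝ, 0 < c → c⁻¹ ≤ C → C⁻¹ ≤ c := by
      intro c hc h
      have h1 : C⁻¹ ≤ (c⁻¹)⁻¹ := inv_anti₀ (inv_pos.mpr hc) h
      rwa [inv_inv] at h1
    refine ⟨hinv _ hcK0 ?_, hinv _ hcLp0 ?_, hinv _ hcM0 ?_⟩
    · exact le_trans (le_max_left _ cLp⁻¹) (le_trans (le_max_left _ cM⁻¹) (le_max_right _ _))
    · exact le_trans (le_max_right cK⁻¹ _) (le_trans (le_max_left _ cM⁻¹) (le_max_right _ _))
    · exact le_trans (le_max_right _ cM⁻¹) (le_max_right _ _)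
  refine ⟨C, hC0, fun G hm μ hμ u hu hmass hEn => ?_⟩
  set X1 : ℝ := 2 * ((p - 2) / (6 - p)) + 1 with hX1def
  set X2 : ℝ := (p - 2) / (6 - p) + 1 with hX2def
  have hsX1 : s = X1 := by rw [hsdef, hX1def]; field_simp; ring
  have hX2half : X2 = (X1 + 1) / 2 := by rw [hX1def, hX2def]; ring
  have hμX1 : (0:ℝ) < μ ^ X1 := Real.rpow_pos_of_pos hμ _
  have hμX2 : (0:ℝ) < μ ^ X2 := Real.rpow_pos_of_pos hμ _
  obtain ⟨hM0, hBdd, hGN⟩ := UAPE.GN_sup hm hu hμ hmass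
  have hKpos := UAPE.kin_pos hm hu hμ hmass
  have hK0 : 0 ≤ kinG G u := UAPE.kinG_nonneg
  have hE : energyG p G u ≤ -(c₀/2) * μ ^ X1 := by
    have h1 := hlevel G hm μ hμ
    rw [hsX1] at h1
    calc energyG p G u ≤ (1/2) * levelG p G μ := hEn
      _ ≤ (1/2) * (-c₀ * μ ^ X1) := by linarith
      _ = -(c₀/2) * μ ^ X1 := by ring
  have hEdef : energyG p G u = (1/2) * kinG G u - (1/p) * lpG p G u := rfl
  have hEKL : (1/2) * kinG G u - (1/p) * lpG p G u ≤ -(c₀/2) * μ ^ X1 := by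
    rw [← hEdef]; exact hE
  -- (1) lower bound for the Lᵖ norm
  have hLp_low : cLp * μ ^ X1 ≤ lpG p G u := by
    have h3 : (c₀/2) * μ ^ X1 ≤ (1/p) * lpG p G u := by linarith
    have h4 : p * ((c₀ / 2) * μ ^ X1) ≤ p * ((1/p) * lpG p G u) :=
      mul_le_mul_of_nonneg_left h3 hp0.le
    have h5 : p * ((1/p) * lpG p G u) = lpG p G u := by field_simp
    calc cLp * μ ^ X1 = p * ((c₀/2) * μ ^ X1) := by rw [hcLp]; ring
      _ ≤ p * ((1/p) * lpG p G u) := h4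
      _ = lpG p G u := h5
  -- lower bound for M^(p-2)
  have hGNlp := UAPE.GN_lp hp₁.le hu hBdd
  rw [hmass] at hGNlp
  have hMp : cLp * μ ^ (X1 - 1) ≤ supNormG G u ^ (p - 2) := by
    have h2 : cLp * μ ^ X1 ≤ supNormG G u ^ (p-2) * μ := le_trans hLp_low hGNlp
    have h3 : μ ^ (X1 - 1) = μ ^ X1 / μ := Real.rpow_sub_one hμ.ne' X1
    rw [h3, ← mul_div_assoc, div_le_iff₀ hμ]
    exact h2
  -- (2) lower bound for M²
  have hM2_low : cM * μ ^ X2 ≤ supNormG G u ^ 2 := by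
    have h1 : (cLp * μ ^ (X1-1)) ^ (2/(p-2)) ≤ (supNormG G u ^ (p-2)) ^ (2/(p-2)) :=
      Real.rpow_le_rpow (by positivity) hMp (by positivity)
    have h2 : (supNormG G u ^ (p-2)) ^ (2/(p-2)) = supNormG G u ^ 2 := by
      rw [← Real.rpow_mul hM0, mul_comm (p-2) (2/(p-2)), div_mul_cancel₀ _ hp22.ne',
        Real.rpow_two]
    have h3 : (cLp * μ ^ (X1-1)) ^ (2/(p-2)) = cM * μ ^ ((X1-1) * (2/(p-2))) := by
      rw [Real.mul_rpow hcLp0.le (Real.rpow_nonneg hμ.le _), hcM, ← Real.rpow_mul hμ.le]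
    have h4 : (X1 - 1) * (2/(p-2)) = X2 := by
      rw [hX1def, hX2def]; field_simp; ring
    rw [h2, h3, h4] at h1
    exact h1
  -- (3) lower bound for K
  have hK_low : cK * μ ^ X1 ≤ kinG G u := by
    have h1 : (cM/12) * μ ^ X2 ≤ Real.sqrt (μ * kinG G u) := by linarith
    have h2 : ((cM/12) * μ ^ X2) ^ 2 ≤ μ * kinG G u :=
      (Real.le_sqrt (by positivity) (by positivity)).mp h1
    have h3 : ((cM/12) * μ ^ X2) ^ 2 = cK * (μ ^ X1 * μ) := by
      have e1 : μ ^ X2 * μ ^ X2 = μ ^ X1 * μ := by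
        rw [← Real.rpow_add hμ, show X2 + X2 = X1 + 1 by rw [hX2half]; ring,
          Real.rpow_add_one hμ.ne']
      rw [hcK]
      calc ((cM/12) * μ ^ X2) ^ 2 = (cM/12)^2 * (μ ^ X2 * μ ^ X2) := by ring
        _ = (cM/12)^2 * (μ ^ X1 * μ) := by rw [e1]
    rw [h3] at h2
    have h4 : cK * μ ^ X1 * μ ≤ kinG G u * μ := by
      calc cK * μ ^ X1 * μ = cK * (μ ^ X1 * μ) := by ring
        _ ≤ μ * kinG G u := h2
        _ = kinG G u * μ := by ring
    exact le_of_mul_le_mul_right h4 hμ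
  -- K ≤ (2 c8 / p) μ^(q+1) K^q
  have hlp_le := UAPE.lp_le_of_GN hp₁.le hu hBdd hM0 hμ hmass hGN
  rw [← hc8, ← hqdef] at hlp_le
  have hKself : kinG G u ≤ (2*c8/p) * μ ^ (q+1) * kinG G u ^ q := by
    have h1 : (1/2) * kinG G u ≤ (1/p) * lpG p G u := by
      have : (0:ℝ) < (c₀/2) * μ ^ X1 := by positivity
      linarith
    have h2 : (1/p) * lpG p G u ≤ (1/p) * (c8 * μ ^ (q + 1) * kinG G u ^ q) :=
      mul_le_mul_of_nonneg_left hlp_le (by positivity)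
    calc kinG G u = 2 * ((1/2) * kinG G u) := by ring
      _ ≤ 2 * ((1/p) * (c8 * μ ^ (q + 1) * kinG G u ^ q)) := by linarith
      _ = (2*c8/p) * μ ^ (q+1) * kinG G u ^ q := by field_simp
  -- (4) upper bound for K
  have hK_up : kinG G u ≤ CK * μ ^ X1 := by
    have hKq0 : 0 < kinG G u ^ q := Real.rpow_pos_of_pos hKpos _
    have hKmq0 : 0 < kinG G u ^ (-q) := Real.rpow_pos_of_pos hKpos _
    have h3 := mul_le_mul_of_nonneg_right hKself hKmq0.le
    have e1 : kinG G u * kinG G u ^ (-q) = kinG G u ^ (1-q) := by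
      nth_rewrite 1 [← Real.rpow_one (kinG G u)]
      rw [← Real.rpow_add hKpos, show (1:ℝ) + -q = 1 - q by ring]
    have e2 : kinG G u ^ q * kinG G u ^ (-q) = 1 := by
      rw [← Real.rpow_add hKpos]; norm_num
    have hKq : kinG G u ^ (1-q) ≤ (2*c8/p) * μ ^ (q+1) := by
      calc kinG G u ^ (1-q) = kinG G u * kinG G u ^ (-q) := e1.symm
        _ ≤ (2*c8/p) * μ ^ (q+1) * kinG G u ^ q * kinG G u ^ (-q) := h3
        _ = (2*c8/p) * μ ^ (q+1) * (kinG G u ^ q * kinG G u ^ (-q)) := by ring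
        _ = (2*c8/p) * μ ^ (q+1) := by rw [e2, mul_one]
    have h4 : (kinG G u ^ (1-q)) ^ ((1-q)⁻¹) ≤ ((2*c8/p) * μ ^ (q+1)) ^ ((1-q)⁻¹) :=
      Real.rpow_le_rpow (Real.rpow_nonneg hK0 _) hKq (by positivity)
    have e3 : (kinG G u ^ (1-q)) ^ ((1-q)⁻¹) = kinG G u :=
      Real.rpow_rpow_inv hK0 h1q.ne'
    have e4 : ((2*c8/p) * μ ^ (q+1)) ^ ((1-q)⁻¹) = CK * μ ^ ((q+1) * (1-q)⁻¹) := by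
      rw [Real.mul_rpow (by positivity) (Real.rpow_nonneg hμ.le _), hCK,
        ← Real.rpow_mul hμ.le]
    have e5 : (q+1) * (1-q)⁻¹ = X1 := by
      rw [hqdef, hX1def]
      rw [show ((1:ℝ) - (p-2)/4)⁻¹ = 4 / (6-p) by rw [show (1:ℝ) - (p-2)/4 = (6-p)/4 by ring]; rw [inv_div]]
      field_simp
      ring
    rw [e3, e4, e5] at h4
    exact h4
  -- (5) upper bound for Lp
  have hLp_up : lpG p G u ≤ CLp * μ ^ X1 := by
    have h1 : kinG G u ^ q ≤ (CK * μ ^ X1) ^ q :=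
      Real.rpow_le_rpow hK0 hK_up hq0.le
    have e1 : (CK * μ ^ X1) ^ q = CK ^ q * μ ^ (X1 * q) := by
      rw [Real.mul_rpow hCK0.le (Real.rpow_nonneg hμ.le _), ← Real.rpow_mul hμ.le]
    have h2 : lpG p G u ≤ c8 * μ ^ (q+1) * (CK ^ q * μ ^ (X1 * q)) := by
      refine le_trans hlp_le ?_
      refine mul_le_mul_of_nonneg_left ?_ (by positivity)
      rw [← e1]; exact h1
    have e2 : c8 * μ ^ (q+1) * (CK ^ q * μ ^ (X1 * q)) = CLp * μ ^ ((q+1) + X1 * q) := by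
      rw [Real.rpow_add hμ (q+1) (X1*q), hCLp]; ring
    have e3 : (q+1) + X1 * q = X1 := by
      rw [hqdef, hX1def]; field_simp; ring
    rw [e2, e3] at h2
    exact h2
  -- (6) upper bound for M²
  have hM2_up : supNormG G u ^ 2 ≤ CM * μ ^ X2 := by
    have h1 : μ * kinG G u ≤ CK * μ ^ (X1 + 1) := by
      calc μ * kinG G u ≤ μ * (CK * μ ^ X1) := mul_le_mul_of_nonneg_left hK_up hμ.le
        _ = CK * μ ^ (X1 + 1) := by
              rw [Real.rpow_add hμ X1 1, Real.rpow_one, mul_comm (μ ^ X1) μ, mul_left_comm]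
    have h2 : Real.sqrt (μ * kinG G u) ≤ Real.sqrt (CK * μ ^ (X1+1)) :=
      Real.sqrt_le_sqrt h1
    have e1 : Real.sqrt (CK * μ ^ (X1+1)) = Real.sqrt CK * μ ^ X2 := by
      rw [Real.sqrt_mul hCK0.le, Real.sqrt_eq_rpow (μ ^ (X1+1)), ← Real.rpow_mul hμ.le,
        show (X1 + 1) * (1/2) = X2 by rw [hX2half]; ring]
    calc supNormG G u ^ 2 ≤ 12 * Real.sqrt (μ * kinG G u) := hGN
      _ ≤ 12 * (Real.sqrt CK * μ ^ X2) := by rw [← e1]; linarith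
      _ = CM * μ ^ X2 := by rw [hCM]; ring
  -- final assembly
  have hμX1' : (0:ℝ) ≤ μ ^ X1 := hμX1.le
  have hμX2' : (0:ℝ) ≤ μ ^ X2 := hμX2.le
  refine ⟨⟨?_, ?_⟩, ⟨?_, ?_⟩, ?_, ?_⟩
  · exact le_trans (mul_le_mul_of_nonneg_right hCinv.1 hμX1') hK_low
  · exact le_trans hK_up (mul_le_mul_of_nonneg_right hCge.1 hμX1')
  · exact le_trans (mul_le_mul_of_nonneg_right hCinv.2.1 hμX1') hLp_low
  · exact le_trans hLp_up (mul_le_mul_of_nonneg_right hCge.2.1 hμX1')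
  · exact le_trans (mul_le_mul_of_nonneg_right hCinv.2.2 hμX2') hM2_low
  · exact le_trans hM2_up (mul_le_mul_of_nonneg_right hCge.2.2 hμX2')
end
end
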